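/- arXiv:2506.17731 — 2 statements merged into one kernel-verified Lean document; each statement's English description precedes it below -/
import Mathlib

section
/- Let d ≥ 1 and k ∈ ℕ. There exists a constant C = C(d,k) > 0 such that for every N ≥ 1, every function u₀ spectrally localized at scale N, and every admissible monomial operator A of order k, one has ‖A u₀‖_{L²(ℝ^d)} ≤ C N^k ‖u₀‖_{L²(ℝ^d)}. -/
open MeasureTheory Complex
open scoped BigOperators ComplexConjugate

noncomputable section

abbrev ESp (d : ℕ) := EuclideanSpace ℝ (Fin d)

/-- Partial derivative in the `j`-th coordinate direction. -/
def pd {F : Type*} [NormedAddCommGroup F] [NormedSpace ℝ F] (d : ℕ) (j : Fin d)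
    (f : ESp d → F) : ESp d → F :=
  fun x => fderiv ℝ f x (EuclideanSpace.single j 1)

/-- The Laplacian. -/
def lap {F : Type*} [NormedAddCommGroup F] [NormedSpace ℝ F] (d : ℕ)
    (f : ESp d → F) : ESp d → F :=
  fun x => ∑ j : Fin d, pd d j (pd d j f) x

/-- The quantum harmonic oscillator `H f = -Δ f + |x|² f`. -/
def Hop {F : Type*} [NormedAddCommGroup F] [NormedSpace ℝ F] (d : ℕ)
    (f : ESp d → F) : ESp d → F :=
  fun x => - lap d f x + (‖x‖ ^ 2 : ℝ) • f x

/-- `e` is a Schwartz eigenfunction of `H` with eigenvalue `μ²`, `μ > 0`. -/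
def IsEigen {F : Type*} [NormedAddCommGroup F] [NormedSpace ℝ F] (d : ℕ) (μ : ℝ)
    (e : ESp d → F) : Prop :=
  0 < μ ∧ (∃ φ : SchwartzMap (ESp d) F, ⇑φ = e) ∧ ∀ x, Hop d e x = (μ ^ 2) • e x

/-- The family `e` with square-root eigenvalues `μ` is spectrally localized at scale `N`. -/
def Localized (d : ℕ) (N : ℝ) {m : ℕ} (μ : Fin m → ℝ) (e : Fin m → ESp d → ℂ) : Prop :=
  ∀ j, IsEigen d (μ j) (e j) ∧ N ≤ μ j ∧ μ j ≤ 2 * N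

/-- The linear Hermite–Schrödinger evolution `e^{-itH} (∑ⱼ eⱼ)`. -/
def evol {d m : ℕ} (μ : Fin m → ℝ) (e : Fin m → ESp d → ℂ) (t : ℝ) (x : ESp d) : ℂ :=
  ∑ j, Complex.exp (-(Complex.I * (t : ℂ) * ((μ j : ℂ)) ^ 2)) * e j x

/-- The `L²(ℝ^d)` norm. -/
def L2 {F : Type*} [NormedAddCommGroup F] (d : ℕ) (f : ESp d → F) : ℝ :=
  (∫ x : ESp d, ‖f x‖ ^ 2) ^ ((1 : ℝ) / 2)

/-- The space-time `L²([0,T] × ℝ^d)` norm. -/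
def stL2 (d : ℕ) (T : ℝ) (G : ℝ → ESp d → ℂ) : ℝ :=
  (∫ t in (0:ℝ)..T, ∫ x : ESp d, ‖G t x‖ ^ 2) ^ ((1 : ℝ) / 2)

/-- An admissible monomial operator: the composition `A₁ ∘ ⋯ ∘ A_k` where each `Aᵢ` is
either a coordinate partial derivative (`Bool` value `true`) or multiplication by a
coordinate function (`Bool` value `false`). The order is the length of the list. -/
def monOp (d : ℕ) : List (Bool × Fin d) → (ESp d → ℂ) → ESp d → ℂ
  | [], f => f
  | (b, j) :: rest, f =>
      let g := monOp d rest f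
      if b then pd d j g else fun x => ((x j : ℝ) : ℂ) * g x

/-! ### Auxiliary development -/

namespace Bernstein

variable {d : ℕ}

abbrev S (d : ℕ) := SchwartzMap (ESp d) ℂ

/-- Coordinate-derivative operator on Schwartz space. -/
def Dop (d : ℕ) (j : Fin d) : S d →L[ℝ] S d :=
  (SchwartzMap.evalCLM ℝ (ESp d) ℂ (EuclideanSpace.single j 1)).comp (SchwartzMap.fderivCLM ℝ (ESp d) ℂ)

/-- Coordinate-multiplication operator on Schwartz space. -/
def Xop (d : ℕ) (j : Fin d) : S d →L[ℝ] S d :=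
  SchwartzMap.bilinLeftCLM ((ContinuousLinearMap.lsmul ℝ ℝ : ℝ →L[ℝ] ℂ →L[ℝ] ℂ).flip)
    ((EuclideanSpace.proj (𝕜 := ℝ) j).hasTemperateGrowth)

lemma Dop_apply (j : Fin d) (φ : S d) (x : ESp d) :
    Dop d j φ x = fderiv ℝ φ x (EuclideanSpace.single j 1) := rfl

lemma Dop_coe (j : Fin d) (φ : S d) : ⇑(Dop d j φ) = pd d j ⇑φ := rfl

lemma Xop_apply (j : Fin d) (φ : S d) (x : ESp d) : Xop d j φ x = (x j) • φ x := rfl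

lemma Xop_coe (j : Fin d) (φ : S d) : ⇑(Xop d j φ) = fun x => (x j) • φ x := rfl

lemma Xop_apply' (j : Fin d) (φ : S d) (x : ESp d) : Xop d j φ x = ((x j : ℝ) : ℂ) * φ x := by
  rw [Xop_apply, Complex.real_smul]

lemma sum_apply {ι : Type*} (s : Finset ι) (f : ι → S d) (x : ESp d) :
    (∑ i ∈ s, f i) x = ∑ i ∈ s, f i x := by
  have h := map_sum (FunLike.coeAddMonoidHom (S d) (ESp d) ℂ) f s
  have h2 : ⇑(∑ i ∈ s, f i) = ∑ i ∈ s, ⇑(f i) := h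
  rw [h2, Finset.sum_apply]

/-! ### Product rule and commutation of derivatives -/

lemma D_X (i j : Fin d) (φ : S d) :
    Dop d j (Xop d i φ) = Xop d i (Dop d j φ) + (if i = j then (1:ℝ) else 0) • φ := by
  ext x
  set v : ESp d := EuclideanSpace.single j 1
  have hc : HasFDerivAt (fun y : ESp d => y i) (EuclideanSpace.proj (𝕜 := ℝ) i) x :=
    (EuclideanSpace.proj (𝕜 := ℝ) i).hasFDerivAt
  have hf : HasFDerivAt (fun y : ESp d => (y i) • φ y)
      ((x i) • fderiv ℝ φ x + (EuclideanSpace.proj (𝕜 := ℝ) i).smulRight (φ x)) x :=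
    hc.smul φ.differentiableAt.hasFDerivAt
  have hD : Dop d j (Xop d i φ) x = fderiv ℝ (fun y : ESp d => (y i) • φ y) x v := by
    rw [Dop_apply, Xop_coe]
  rw [hD, hf.fderiv]
  have hv : (v : ESp d) i = if i = j then (1:ℝ) else 0 := by
    simp [v, EuclideanSpace.single_apply]
  simp only [ContinuousLinearMap.add_apply, ContinuousLinearMap.coe_smul', Pi.smul_apply,
    ContinuousLinearMap.smulRight_apply]
  rw [Xop_apply, Dop_apply]
  congr 1
  show (v i) • φ x = _
  rw [hv]

lemma fderiv_pd_apply (φ : S d) (x w v : ESp d) :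
    fderiv ℝ (fun y => fderiv ℝ φ y w) x v = fderiv ℝ (fderiv ℝ ⇑φ) x v w := by
  have hd : DifferentiableAt ℝ (fderiv ℝ ⇑φ) x := by
    have h2 : ContDiff ℝ 1 (fderiv ℝ ⇑φ) := by
      apply ContDiff.fderiv_right φ.smooth'
      norm_cast
    exact (h2.differentiable (by norm_num)).differentiableAt
  have h : HasFDerivAt (fun y => fderiv ℝ φ y w)
      ((ContinuousLinearMap.apply ℝ ℂ w).comp (fderiv ℝ (fderiv ℝ ⇑φ) x)) x :=
    (ContinuousLinearMap.apply ℝ ℂ w).hasFDerivAt.comp x hd.hasFDerivAt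
  rw [h.fderiv]; rfl

lemma D_comm (i j : Fin d) (φ : S d) : Dop d i (Dop d j φ) = Dop d j (Dop d i φ) := by
  ext x
  have hsym : IsSymmSndFDerivAt ℝ (⇑φ) x := by
    apply ContDiffAt.isSymmSndFDerivAt (n := 2)
    · exact (φ.smooth'.of_le (by norm_cast)).contDiffAt
    · norm_num
  rw [Dop_apply, Dop_apply]
  have h1 : ⇑(Dop d j φ) = fun y => fderiv ℝ φ y (EuclideanSpace.single j 1) := rfl
  have h2 : ⇑(Dop d i φ) = fun y => fderiv ℝ φ y (EuclideanSpace.single i 1) := rfl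
  rw [h1, h2, fderiv_pd_apply, fderiv_pd_apply, hsym.eq]

lemma X_comm (i j : Fin d) (φ : S d) : Xop d i (Xop d j φ) = Xop d j (Xop d i φ) := by
  ext x
  simp only [Xop_apply]
  rw [smul_comm]

/-! ### The harmonic oscillator on Schwartz space -/

def Hs (d : ℕ) : S d →L[ℝ] S d :=
  ∑ j : Fin d, ((Xop d j).comp (Xop d j) - (Dop d j).comp (Dop d j))

lemma Hs_eq (φ : S d) :
    Hs d φ = ∑ j : Fin d, (Xop d j (Xop d j φ) - Dop d j (Dop d j φ)) := by
  rw [Hs, ContinuousLinearMap.sum_apply]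
  congr 1

lemma norm_sq_eq (x : ESp d) : ‖x‖^2 = ∑ j, (x j)^2 := by
  rw [EuclideanSpace.norm_eq, Real.sq_sqrt (by positivity)]
  congr 1
  funext j
  rw [Real.norm_eq_abs, _root_.sq_abs]

lemma Hs_coe (φ : S d) (x : ESp d) : Hs d φ x = Hop d ⇑φ x := by
  rw [Hs_eq, sum_apply, Hop]
  have hlap : lap d ⇑φ x = ∑ j : Fin d, (Dop d j (Dop d j φ)) x := by
    rw [lap]
    congr 1
  have hterm : ∀ j : Fin d, (Xop d j (Xop d j φ) - Dop d j (Dop d j φ)) x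
      = (x j ^ 2) • φ x - (Dop d j (Dop d j φ)) x := by
    intro j
    rw [SchwartzMap.sub_apply, Xop_apply, Xop_apply, smul_smul, ← sq]
  rw [Finset.sum_congr rfl (fun j _ => hterm j), Finset.sum_sub_distrib, hlap, norm_sq_eq,
    Finset.sum_smul]
  ring

/-! ### Commutators -/

lemma H_D (j : Fin d) (φ : S d) :
    Hs d (Dop d j φ) = Dop d j (Hs d φ) - (2:ℝ) • Xop d j φ := by
  rw [Hs_eq, Hs_eq, map_sum]
  have hterm : ∀ i : Fin d,
      Dop d j (Xop d i (Xop d i φ) - Dop d i (Dop d i φ))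
        = (Xop d i (Xop d i (Dop d j φ)) - Dop d i (Dop d i (Dop d j φ)))
          + (if i = j then (2:ℝ) else 0) • Xop d i φ := by
    intro i
    rw [map_sub]
    have h1 : Dop d j (Xop d i (Xop d i φ))
        = Xop d i (Xop d i (Dop d j φ)) + (if i = j then (2:ℝ) else 0) • Xop d i φ := by
      rw [D_X, D_X, map_add, _root_.map_smul]
      rw [add_assoc, ← add_smul]
      congr 1
      by_cases h : i = j <;> simp [h] <;> norm_num
    have h2 : Dop d j (Dop d i (Dop d i φ)) = Dop d i (Dop d i (Dop d j φ)) := by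
      rw [D_comm j i, D_comm j i]
    rw [h1, h2]
    abel
  rw [Finset.sum_congr rfl (fun i _ => hterm i), Finset.sum_add_distrib]
  have hsum : ∑ i : Fin d, (if i = j then (2:ℝ) else 0) • Xop d i φ = (2:ℝ) • Xop d j φ := by
    have : ∀ i : Fin d, (if i = j then (2:ℝ) else 0) • Xop d i φ
        = if i = j then (2:ℝ) • Xop d j φ else 0 := by
      intro i
      by_cases h : i = j <;> simp [h]
    rw [Finset.sum_congr rfl (fun i _ => this i), Finset.sum_ite_eq' Finset.univ j]
    simp
  rw [hsum]
  abel

lemma H_X (j : Fin d) (φ : S d) :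
    Hs d (Xop d j φ) = Xop d j (Hs d φ) - (2:ℝ) • Dop d j φ := by
  rw [Hs_eq, Hs_eq, map_sum]
  have hterm : ∀ i : Fin d,
      (Xop d i (Xop d i (Xop d j φ)) - Dop d i (Dop d i (Xop d j φ)))
        = Xop d j (Xop d i (Xop d i φ) - Dop d i (Dop d i φ))
          - (if j = i then (2:ℝ) else 0) • Dop d i φ := by
    intro i
    rw [map_sub]
    have h1 : Xop d i (Xop d i (Xop d j φ)) = Xop d j (Xop d i (Xop d i φ)) := by
      rw [X_comm i j, X_comm i j]
    have h2 : Dop d i (Dop d i (Xop d j φ))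
        = Xop d j (Dop d i (Dop d i φ)) + (if j = i then (2:ℝ) else 0) • Dop d i φ := by
      rw [D_X j i, map_add, D_X j i, _root_.map_smul]
      rw [add_assoc, ← add_smul]
      congr 1
      by_cases h : j = i <;> simp [h] <;> norm_num
    rw [h1, h2]
    abel
  rw [Finset.sum_congr rfl (fun i _ => hterm i), Finset.sum_sub_distrib]
  have hsum : ∑ i : Fin d, (if j = i then (2:ℝ) else 0) • Dop d i φ = (2:ℝ) • Dop d j φ := by
    have : ∀ i : Fin d, (if j = i then (2:ℝ) else 0) • Dop d i φ
        = if i = j then (2:ℝ) • Dop d j φ else 0 := by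
      intro i
      by_cases h : i = j <;> simp [h]
      · intro h'; exact absurd h'.symm h
    rw [Finset.sum_congr rfl (fun i _ => this i), Finset.sum_ite_eq' Finset.univ j]
    simp
  rw [hsum]

/-! ### Inner product machinery -/

def ipS (φ ψ : S d) : ℂ := ∫ x : ESp d, φ x * conj (ψ x)

lemma integrable_mul_conj (φ ψ : S d) : Integrable (fun x => (φ x) * conj (ψ x)) volume := by
  apply Integrable.bdd_mul
  · exact (Complex.conjCLE.toContinuousLinearMap : ℂ →L[ℝ] ℂ).integrable_comp ψ.integrable
  · exact φ.continuous.aestronglyMeasurable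
  · exact Filter.Eventually.of_forall
      (fun x => φ.toBoundedContinuousFunction.norm_coe_le_norm x)

lemma intSq_nonneg (φ : S d) : 0 ≤ ∫ x : ESp d, ‖φ x‖^2 :=
  integral_nonneg (fun x => by positivity)

lemma ipS_self (φ : S d) : ipS φ φ = ((∫ x : ESp d, ‖φ x‖^2 : ℝ) : ℂ) := by
  rw [ipS]
  have h : ∀ x : ESp d, φ x * conj (φ x) = ((‖φ x‖^2 : ℝ) : ℂ) := by
    intro x
    rw [Complex.mul_conj]
    norm_cast
    rw [Complex.normSq_eq_norm_sq]
  rw [integral_congr_ae (Filter.Eventually.of_forall h)]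
  exact integral_ofReal

lemma ipS_self_re (φ : S d) : (ipS φ φ).re = ∫ x : ESp d, ‖φ x‖^2 := by
  rw [ipS_self, Complex.ofReal_re]

lemma ipS_smul_left (r : ℝ) (φ ψ : S d) : ipS (r • φ) ψ = r • ipS φ ψ := by
  rw [ipS, ipS, ← integral_smul]
  congr 1; funext x
  rw [SchwartzMap.smul_apply, smul_mul_assoc]

lemma ipS_smul_right (r : ℝ) (φ ψ : S d) : ipS φ (r • ψ) = r • ipS φ ψ := by
  rw [ipS, ipS, ← integral_smul]
  congr 1; funext x
  rw [SchwartzMap.smul_apply]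
  rw [show (r • ψ x : ℂ) = (r : ℂ) * ψ x from Complex.real_smul]
  rw [map_mul, Complex.conj_ofReal]
  rw [show (r • (φ x * conj (ψ x)) : ℂ) = (r:ℂ) * (φ x * conj (ψ x)) from Complex.real_smul]
  ring

lemma ipS_sum_left {ι : Type*} (s : Finset ι) (f : ι → S d) (ψ : S d) :
    ipS (∑ i ∈ s, f i) ψ = ∑ i ∈ s, ipS (f i) ψ := by
  classical
  induction s using Finset.induction_on with
  | empty =>
      simp only [Finset.sum_empty, ipS]
      have : ∀ x : ESp d, (0 : S d) x * conj (ψ x) = 0 := by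
        intro x; rw [show ((0:S d) x : ℂ) = 0 from rfl, zero_mul]
      rw [integral_congr_ae (Filter.Eventually.of_forall this), integral_zero]
  | insert a s' hnotmem ih =>
      rw [Finset.sum_insert hnotmem, Finset.sum_insert hnotmem, ← ih, ipS, ipS, ipS,
        ← integral_add (integrable_mul_conj _ _) (integrable_mul_conj _ _)]
      congr 1; funext x
      rw [SchwartzMap.add_apply, add_mul]

lemma ipS_sum_right {ι : Type*} (s : Finset ι) (φ : S d) (f : ι → S d) :
    ipS φ (∑ i ∈ s, f i) = ∑ i ∈ s, ipS φ (f i) := by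
  classical
  induction s using Finset.induction_on with
  | empty =>
      simp only [Finset.sum_empty, ipS]
      have : ∀ x : ESp d, φ x * conj ((0 : S d) x) = 0 := by
        intro x; rw [show ((0:S d) x : ℂ) = 0 from rfl, map_zero, mul_zero]
      rw [integral_congr_ae (Filter.Eventually.of_forall this), integral_zero]
  | insert a s' hnotmem ih =>
      rw [Finset.sum_insert hnotmem, Finset.sum_insert hnotmem, ← ih, ipS, ipS, ipS,
        ← integral_add (integrable_mul_conj _ _) (integrable_mul_conj _ _)]
      congr 1; funext x
      rw [SchwartzMap.add_apply, map_add, mul_add]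

lemma ipS_sub_left (φ₁ φ₂ ψ : S d) : ipS (φ₁ - φ₂) ψ = ipS φ₁ ψ - ipS φ₂ ψ := by
  rw [ipS, ipS, ipS, ← integral_sub (integrable_mul_conj _ _) (integrable_mul_conj _ _)]
  congr 1; funext x
  rw [SchwartzMap.sub_apply, sub_mul]

lemma ipS_sub_right (φ ψ₁ ψ₂ : S d) : ipS φ (ψ₁ - ψ₂) = ipS φ ψ₁ - ipS φ ψ₂ := by
  rw [ipS, ipS, ipS, ← integral_sub (integrable_mul_conj _ _) (integrable_mul_conj _ _)]
  congr 1; funext x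
  rw [SchwartzMap.sub_apply, map_sub, mul_sub]

lemma fderiv_conj_apply (ψ : S d) (x v : ESp d) :
    fderiv ℝ (fun y => conj (ψ y)) x v = conj (fderiv ℝ ψ x v) := by
  have h : HasFDerivAt (fun y => conj (ψ y))
      ((Complex.conjCLE.toContinuousLinearMap : ℂ →L[ℝ] ℂ).comp (fderiv ℝ ψ x)) x :=
    ((Complex.conjCLE.toContinuousLinearMap : ℂ →L[ℝ] ℂ).hasFDerivAt.comp x
      ψ.differentiableAt.hasFDerivAt)
  rw [h.fderiv]; rfl

lemma ipS_D_left (j : Fin d) (φ ψ : S d) : ipS (Dop d j φ) ψ = - ipS φ (Dop d j ψ) := by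
  classical
  set v : ESp d := EuclideanSpace.single j 1
  have hconj : Differentiable ℝ (fun y => conj (ψ y)) :=
    fun x => ((Complex.conjCLE.toContinuousLinearMap : ℂ →L[ℝ] ℂ).hasFDerivAt.comp x
      ψ.differentiableAt.hasFDerivAt).differentiableAt
  have key := integral_mul_fderiv_eq_neg_fderiv_mul_of_integrable (μ := (volume : Measure (ESp d)))
    (f := fun y => conj (ψ y)) (g := ⇑φ) (v := v)
    ?_ ?_ ?_ (fun x _ => hconj x) (fun x _ => φ.differentiableAt)
  · have l1 : ipS (Dop d j φ) ψ = ∫ x : ESp d, conj (ψ x) * fderiv ℝ φ x v := by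
      rw [ipS]; congr 1; funext x; rw [Dop_apply]; ring
    have l2 : ∫ x : ESp d, fderiv ℝ (fun y => conj (ψ y)) x v * φ x = ipS φ (Dop d j ψ) := by
      rw [ipS]; congr 1; funext x; rw [fderiv_conj_apply, Dop_apply]; ring
    rw [l1, key, l2]
  · have : (fun x => fderiv ℝ (fun y => conj (ψ y)) x v * φ x)
        = fun x => φ x * conj ((Dop d j ψ) x) := by
      funext x; rw [fderiv_conj_apply, Dop_apply]; ring
    rw [this]; exact integrable_mul_conj _ _
  · have : (fun x => conj (ψ x) * fderiv ℝ φ x v)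
        = fun x => (Dop d j φ) x * conj (ψ x) := by
      funext x; rw [Dop_apply]; ring
    rw [this]; exact integrable_mul_conj _ _
  · have : (fun x => conj (ψ x) * φ x) = fun x => φ x * conj (ψ x) := by
      funext x; ring
    rw [this]; exact integrable_mul_conj _ _

lemma ipS_X_left (j : Fin d) (φ ψ : S d) : ipS (Xop d j φ) ψ = ipS φ (Xop d j ψ) := by
  rw [ipS, ipS]
  congr 1; funext x
  rw [Xop_apply', Xop_apply', map_mul, Complex.conj_ofReal]
  ring

lemma ipS_H (φ ψ : S d) : ipS (Hs d φ) ψ = ipS φ (Hs d ψ) := by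
  rw [Hs_eq φ, Hs_eq ψ, ipS_sum_left, ipS_sum_right]
  congr 1; funext j
  rw [ipS_sub_left, ipS_sub_right]
  congr 1
  · rw [ipS_X_left, ipS_X_left]
  · rw [ipS_D_left, ipS_D_left, neg_neg]

lemma ipS_H_self (φ : S d) :
    ipS (Hs d φ) φ
      = ((∑ j : Fin d, ((∫ x : ESp d, ‖Xop d j φ x‖^2) + ∫ x : ESp d, ‖Dop d j φ x‖^2) : ℝ) : ℂ)
      := by
  rw [Hs_eq φ, ipS_sum_left]
  push_cast
  congr 1; funext j
  rw [ipS_sub_left, ipS_X_left, ipS_D_left, ← ipS_self, ← ipS_self]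
  ring

lemma D_sq_le (j : Fin d) (φ : S d) :
    ∫ x : ESp d, ‖Dop d j φ x‖^2 ≤ (ipS (Hs d φ) φ).re := by
  rw [ipS_H_self, Complex.ofReal_re]
  calc ∫ x : ESp d, ‖Dop d j φ x‖^2
      ≤ (∫ x : ESp d, ‖Xop d j φ x‖^2) + ∫ x : ESp d, ‖Dop d j φ x‖^2 := by
        have := intSq_nonneg (Xop d j φ); linarith
    _ ≤ _ := by
        apply Finset.single_le_sum (f := fun j => (∫ x : ESp d, ‖Xop d j φ x‖^2)
          + ∫ x : ESp d, ‖Dop d j φ x‖^2) (fun i _ => ?_) (Finset.mem_univ j)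
        have := intSq_nonneg (Xop d i φ); have := intSq_nonneg (Dop d i φ); linarith

lemma X_sq_le (j : Fin d) (φ : S d) :
    ∫ x : ESp d, ‖Xop d j φ x‖^2 ≤ (ipS (Hs d φ) φ).re := by
  rw [ipS_H_self, Complex.ofReal_re]
  calc ∫ x : ESp d, ‖Xop d j φ x‖^2
      ≤ (∫ x : ESp d, ‖Xop d j φ x‖^2) + ∫ x : ESp d, ‖Dop d j φ x‖^2 := by
        have := intSq_nonneg (Dop d j φ); linarith
    _ ≤ _ := by
        apply Finset.single_le_sum (f := fun j => (∫ x : ESp d, ‖Xop d j φ x‖^2)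
          + ∫ x : ESp d, ‖Dop d j φ x‖^2) (fun i _ => ?_) (Finset.mem_univ j)
        have := intSq_nonneg (Xop d i φ); have := intSq_nonneg (Dop d i φ); linarith

/-! ### Eigenfunctions and spectral localization -/

lemma ortho {a b : ℝ} {φ ψ : S d} (ha : Hs d φ = a • φ) (hb : Hs d ψ = b • ψ)
    (hab : a ≠ b) : ipS φ ψ = 0 := by
  have h1 : a • ipS φ ψ = b • ipS φ ψ := by
    calc a • ipS φ ψ = ipS (a • φ) ψ := (ipS_smul_left a φ ψ).symm
      _ = ipS (Hs d φ) ψ := by rw [ha]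
      _ = ipS φ (Hs d ψ) := ipS_H φ ψ
      _ = ipS φ (b • ψ) := by rw [hb]
      _ = b • ipS φ ψ := ipS_smul_right b φ ψ
  have h2 : (a - b) • ipS φ ψ = 0 := by
    rw [sub_smul, h1, sub_self]
  rcases smul_eq_zero.mp h2 with h | h
  · exact absurd (sub_eq_zero.mp (by exact_mod_cast h)) hab
  · exact h

/-- Spectral localization: `φ` is a sum of eigenfunctions of `Hs` with (distinct)
eigenvalues at most `Λ`. -/
def SpecS (d : ℕ) (Λ : ℝ) (φ : S d) : Prop :=
  ∃ (ι : Type) (_ : Fintype ι) (lam : ι → ℝ) (f : ι → S d),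
    Function.Injective lam ∧ (∀ i, Hs d (f i) = lam i • f i) ∧ (∀ i, lam i ≤ Λ) ∧ φ = ∑ i, f i

lemma specS_of_family {ι : Type} [Fintype ι] {Λ : ℝ} (lam : ι → ℝ) (f : ι → S d)
    (heig : ∀ i, Hs d (f i) = lam i • f i) (hle : ∀ i, lam i ≤ Λ) :
    SpecS d Λ (∑ i, f i) := by
  classical
  set T : Finset ℝ := Finset.image lam Finset.univ with hT
  refine ⟨{c : ℝ // c ∈ T}, inferInstance, Subtype.val,
    fun c => ∑ i ∈ Finset.univ.filter (fun i => lam i = c.val), f i,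
    Subtype.val_injective, ?_, ?_, ?_⟩
  · intro c
    rw [map_sum, Finset.smul_sum]
    apply Finset.sum_congr rfl
    intro i hi
    rw [heig i, (Finset.mem_filter.mp hi).2]
  · intro c
    obtain ⟨i, _, hi⟩ := Finset.mem_image.mp c.property
    rw [← hi]; exact hle i
  · rw [show (∑ c : {c : ℝ // c ∈ T}, ∑ i ∈ Finset.univ.filter (fun i => lam i = c.val), f i)
        = ∑ c ∈ T, ∑ i ∈ Finset.univ.filter (fun i => lam i = c), f i from
      Finset.sum_coe_sort T (fun c => ∑ i ∈ Finset.univ.filter (fun i => lam i = c), f i)]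
    exact (Finset.sum_fiberwise_of_maps_to
      (fun i _ => Finset.mem_image_of_mem lam (Finset.mem_univ i)) f).symm

lemma specS_mono {Λ Λ' : ℝ} (h : Λ ≤ Λ') {φ : S d} (hφ : SpecS d Λ φ) : SpecS d Λ' φ := by
  obtain ⟨ι, hfin, lam, f, hinj, heig, hle, hsum⟩ := hφ
  exact ⟨ι, hfin, lam, f, hinj, heig, fun i => (hle i).trans h, hsum⟩

lemma specS_ipH_le {Λ : ℝ} {φ : S d} (hφ : SpecS d Λ φ) :
    (ipS (Hs d φ) φ).re ≤ Λ * ∫ x : ESp d, ‖φ x‖^2 := by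
  classical
  obtain ⟨ι, hfin, lam, f, hinj, heig, hle, hsum⟩ := hφ
  have hdiag : ∀ i : ι, ∑ i' : ι, ipS (f i) (f i') = ipS (f i) (f i) := by
    intro i
    apply Finset.sum_eq_single_of_mem i (Finset.mem_univ i)
    intro i' _ hne
    exact ortho (heig i) (heig i') (fun h => hne (hinj h).symm)
  have hH : ipS (Hs d φ) φ = ∑ i : ι, lam i • ipS (f i) (f i) := by
    rw [hsum, map_sum, ipS_sum_left]
    apply Finset.sum_congr rfl
    intro i _
    rw [heig i, ipS_smul_left, ipS_sum_right, hdiag i]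
  have hself : ∫ x : ESp d, ‖φ x‖^2 = ∑ i : ι, (ipS (f i) (f i)).re := by
    rw [← ipS_self_re, hsum, ipS_sum_left]
    rw [Complex.re_sum]
    apply Finset.sum_congr rfl
    intro i _
    rw [ipS_sum_right, hdiag i]
  rw [hH, hself, Complex.re_sum, Finset.mul_sum]
  apply Finset.sum_le_sum
  intro i _
  have hre : (lam i • ipS (f i) (f i)).re = lam i * (ipS (f i) (f i)).re := by
    rw [Complex.real_smul, Complex.re_ofReal_mul]
  rw [hre]
  have hnn : 0 ≤ (ipS (f i) (f i)).re := by
    rw [ipS_self_re]; exact intSq_nonneg _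
  exact mul_le_mul_of_nonneg_right (hle i) hnn

/-! ### Ladder structure -/

lemma eig_smul {a r : ℝ} {φ : S d} (h : Hs d φ = a • φ) : Hs d (r • φ) = a • (r • φ) := by
  rw [_root_.map_smul, h, smul_comm]

lemma eig_ladder_down {a : ℝ} {φ : S d} (j : Fin d) (h : Hs d φ = a • φ) :
    Hs d (Dop d j φ + Xop d j φ) = (a - 2) • (Dop d j φ + Xop d j φ) := by
  rw [map_add, H_D, H_X, h, _root_.map_smul, _root_.map_smul]
  rw [sub_smul, smul_add]
  module

lemma eig_ladder_up {a : ℝ} {φ : S d} (j : Fin d) (h : Hs d φ = a • φ) :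
    Hs d (Dop d j φ - Xop d j φ) = (a + 2) • (Dop d j φ - Xop d j φ) := by
  rw [map_sub, H_D, H_X, h, _root_.map_smul, _root_.map_smul]
  rw [add_smul, smul_sub]
  module

lemma specS_D {Λ : ℝ} {φ : S d} (j : Fin d) (hφ : SpecS d Λ φ) :
    SpecS d (Λ + 2) (Dop d j φ) := by
  classical
  obtain ⟨ι, hfin, lam, f, hinj, heig, hle, hsum⟩ := hφ
  have hDφ : Dop d j φ = ∑ s : ι ⊕ ι,
      (Sum.elim (fun i => (1/2 : ℝ) • (Dop d j (f i) + Xop d j (f i)))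
                (fun i => (1/2 : ℝ) • (Dop d j (f i) - Xop d j (f i))) s) := by
    rw [hsum, map_sum, Fintype.sum_sum_type]
    simp only [Sum.elim_inl, Sum.elim_inr]
    rw [← Finset.sum_add_distrib]
    apply Finset.sum_congr rfl
    intro i _
    rw [← smul_add, ← add_sub_assoc]
    module
  rw [hDφ]
  apply specS_of_family (lam := Sum.elim (fun i => lam i - 2) (fun i => lam i + 2))
  · rintro (i | i)
    · exact eig_smul (eig_ladder_down j (heig i))
    · exact eig_smul (eig_ladder_up j (heig i))
  · rintro (i | i)
    · simp only [Sum.elim_inl]; have := hle i; linarith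
    · simp only [Sum.elim_inr]; have := hle i; linarith

lemma specS_X {Λ : ℝ} {φ : S d} (j : Fin d) (hφ : SpecS d Λ φ) :
    SpecS d (Λ + 2) (Xop d j φ) := by
  classical
  obtain ⟨ι, hfin, lam, f, hinj, heig, hle, hsum⟩ := hφ
  have hXφ : Xop d j φ = ∑ s : ι ⊕ ι,
      (Sum.elim (fun i => (1/2 : ℝ) • (Dop d j (f i) + Xop d j (f i)))
                (fun i => (-(1/2) : ℝ) • (Dop d j (f i) - Xop d j (f i))) s) := by
    rw [hsum, map_sum, Fintype.sum_sum_type]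
    simp only [Sum.elim_inl, Sum.elim_inr]
    rw [← Finset.sum_add_distrib]
    apply Finset.sum_congr rfl
    intro i _
    module
  rw [hXφ]
  apply specS_of_family (lam := Sum.elim (fun i => lam i - 2) (fun i => lam i + 2))
  · rintro (i | i)
    · exact eig_smul (eig_ladder_down j (heig i))
    · exact eig_smul (eig_ladder_up j (heig i))
  · rintro (i | i)
    · simp only [Sum.elim_inl]; have := hle i; linarith
    · simp only [Sum.elim_inr]; have := hle i; linarith

/-! ### The key induction -/

def AOpS (d : ℕ) : List (Bool × Fin d) → S d → S d
  | [], φ => φ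
  | (b, j) :: rest, φ => if b then Dop d j (AOpS d rest φ) else Xop d j (AOpS d rest φ)

lemma monOp_coe (A : List (Bool × Fin d)) (φ : S d) :
    monOp d A ⇑φ = ⇑(AOpS d A φ) := by
  induction A with
  | nil => rfl
  | cons hd tl ih =>
      obtain ⟨b, j⟩ := hd
      show (if b then pd d j (monOp d tl ⇑φ)
        else fun x => ((x j : ℝ) : ℂ) * (monOp d tl ⇑φ) x) = _
      rw [ih]
      cases b
      · simp only [Bool.false_eq_true, if_false, AOpS]
        funext x
        rw [← Xop_apply' j (AOpS d tl φ) x]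
      · simp only [if_true, AOpS]
        rw [← Dop_coe]

lemma D_step {Λ : ℝ} (hΛ : 0 ≤ Λ) {φ : S d} (j : Fin d) (hφ : SpecS d Λ φ) :
    ∫ x : ESp d, ‖Dop d j φ x‖^2 ≤ Λ * ∫ x : ESp d, ‖φ x‖^2 :=
  (D_sq_le j φ).trans (specS_ipH_le hφ)

lemma X_step {Λ : ℝ} (hΛ : 0 ≤ Λ) {φ : S d} (j : Fin d) (hφ : SpecS d Λ φ) :
    ∫ x : ESp d, ‖Xop d j φ x‖^2 ≤ Λ * ∫ x : ESp d, ‖φ x‖^2 :=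
  (X_sq_le j φ).trans (specS_ipH_le hφ)

lemma main_induction (A : List (Bool × Fin d)) {Λ : ℝ} (hΛ : 0 ≤ Λ) {φ : S d}
    (hφ : SpecS d Λ φ) :
    SpecS d (Λ + 2 * A.length) (AOpS d A φ) ∧
      (∫ x : ESp d, ‖AOpS d A φ x‖^2)
        ≤ (Λ + 2 * A.length)^(A.length) * ∫ x : ESp d, ‖φ x‖^2 := by
  induction A with
  | nil =>
      constructor
      · simpa [AOpS] using hφ
      · simp [AOpS]
  | cons hd tl ih =>
      obtain ⟨hspec, hbound⟩ := ih
      obtain ⟨b, j⟩ := hd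
      set L : ℕ := tl.length with hL
      have hlen : ((b, j) :: tl).length = L + 1 := rfl
      set ψ : S d := AOpS d tl φ with hψ
      have hΛL : (0:ℝ) ≤ Λ + 2 * L := by positivity
      have hmono : Λ + 2 * L ≤ Λ + 2 * (L + 1) := by push_cast; linarith
      have hIψ : 0 ≤ ∫ x : ESp d, ‖ψ x‖^2 := intSq_nonneg ψ
      have hIφ : 0 ≤ ∫ x : ESp d, ‖φ x‖^2 := intSq_nonneg φ
      have hAop : AOpS d ((b, j) :: tl) φ = if b then Dop d j ψ else Xop d j ψ := rfl
      have hop : (∫ x : ESp d, ‖AOpS d ((b, j) :: tl) φ x‖^2) ≤ (Λ + 2 * L) *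
          ∫ x : ESp d, ‖ψ x‖^2 := by
        rw [hAop]; cases b
        · simpa using X_step hΛL j hspec
        · simpa using D_step hΛL j hspec
      have hspec' : SpecS d (Λ + 2 * ((b, j) :: tl).length) (AOpS d ((b, j) :: tl) φ) := by
        rw [hAop, hlen]
        have h2 : (Λ + 2 * L) + 2 = Λ + 2 * ((L : ℝ) + 1) := by ring
        cases b
        · simp only [Bool.false_eq_true, if_false]
          apply specS_mono (le_of_eq (by push_cast; ring)) (specS_X j hspec)
        · simp only [if_true]
          apply specS_mono (le_of_eq (by push_cast; ring)) (specS_D j hspec)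
      refine ⟨hspec', ?_⟩
      calc (∫ x : ESp d, ‖AOpS d ((b, j) :: tl) φ x‖^2)
          ≤ (Λ + 2 * L) * ∫ x : ESp d, ‖ψ x‖^2 := hop
        _ ≤ (Λ + 2 * L) * ((Λ + 2 * L)^L * ∫ x : ESp d, ‖φ x‖^2) :=
            mul_le_mul_of_nonneg_left hbound hΛL
        _ = (Λ + 2 * L)^(L+1) * ∫ x : ESp d, ‖φ x‖^2 := by ring
        _ ≤ (Λ + 2 * (L+1))^(L+1) * ∫ x : ESp d, ‖φ x‖^2 := by
            apply mul_le_mul_of_nonneg_right _ hIφ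
            apply pow_le_pow_left₀ hΛL
            push_cast; linarith
        _ = (Λ + 2 * (((b, j) :: tl).length : ℝ))^(((b, j) :: tl).length)
              * ∫ x : ESp d, ‖φ x‖^2 := by
            rw [hlen]; push_cast; ring_nf

end Bernstein

/-- Bernstein-type inequality: for `u₀` spectrally localized at scale `N` and `A` an
admissible monomial operator of order `k`, `‖A u₀‖_{L²} ≤ C N^k ‖u₀‖_{L²}`. -/
theorem stmt3 (d k : ℕ) (hd : 1 ≤ d) :
    ∃ C : ℝ, 0 < C ∧
      ∀ (N : ℝ), 1 ≤ N →
        ∀ (m : ℕ) (μ : Fin m → ℝ) (e : Fin m → ESp d → ℂ), Localized d N μ e →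
        ∀ A : List (Bool × Fin d), A.length = k →
          L2 d (monOp d A (fun x => ∑ j, e j x))
            ≤ C * N ^ (k : ℝ) * L2 d (fun x => ∑ j, e j x) := by
  classical
  refine ⟨((4 + 2*(k:ℝ))^k)^((1:ℝ)/2), by positivity, ?_⟩
  intro N hN m μ e hloc A hA
  -- Schwartz representatives
  have hrep : ∀ j : Fin m, ∃ φ : Bernstein.S d, ⇑φ = e j := fun j => (hloc j).1.2.1
  choose φ hφ using hrep
  set Φ : Bernstein.S d := ∑ j, φ j with hΦ
  have hu : (fun x => ∑ j, e j x) = ⇑Φ := by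
    funext x
    rw [hΦ, Bernstein.sum_apply]
    exact Finset.sum_congr rfl (fun j _ => by rw [← hφ j])
  have hN0 : (0:ℝ) < N := lt_of_lt_of_le one_pos hN
  -- spectral localization of Φ
  have heig : ∀ j : Fin m, Bernstein.Hs d (φ j) = ((μ j)^2) • (φ j) := by
    intro j
    ext x
    rw [Bernstein.Hs_coe, hφ j, (hloc j).1.2.2 x, SchwartzMap.smul_apply, hφ j]
  have hle : ∀ j : Fin m, (μ j)^2 ≤ 4 * N^2 := by
    intro j
    have h1 : μ j ≤ 2 * N := (hloc j).2.2
    have h0 : 0 ≤ μ j := le_of_lt (hloc j).1.1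
    calc (μ j)^2 ≤ (2*N)^2 := pow_le_pow_left₀ h0 h1 2
      _ = 4 * N^2 := by ring
  have hspec : Bernstein.SpecS d (4 * N^2) Φ :=
    Bernstein.specS_of_family (fun j => (μ j)^2) φ heig hle
  have hΛ : (0:ℝ) ≤ 4 * N^2 := by positivity
  obtain ⟨-, hbound⟩ := Bernstein.main_induction A hΛ hspec
  rw [hA] at hbound
  -- numeric estimates
  set I0 : ℝ := ∫ x : ESp d, ‖Φ x‖^2 with hI0
  set I1 : ℝ := ∫ x : ESp d, ‖Bernstein.AOpS d A Φ x‖^2 with hI1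
  have hI0n : 0 ≤ I0 := Bernstein.intSq_nonneg Φ
  have hI1n : 0 ≤ I1 := Bernstein.intSq_nonneg _
  have hstep2 : (4 * N^2 + 2 * k)^k ≤ ((4 + 2*(k:ℝ)) * N^2)^k := by
    apply pow_le_pow_left₀ (by positivity)
    have hN2 : (1:ℝ) ≤ N^2 := by nlinarith
    nlinarith [mul_le_mul_of_nonneg_left hN2 (by positivity : (0:ℝ) ≤ 2*(k:ℝ))]
  have hchain : I1 ≤ (4 + 2*(k:ℝ))^k * ((N^k)^2 * I0) := by
    calc I1 ≤ (4 * N^2 + 2 * k)^k * I0 := hbound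
      _ ≤ ((4 + 2*(k:ℝ)) * N^2)^k * I0 := mul_le_mul_of_nonneg_right hstep2 hI0n
      _ = (4 + 2*(k:ℝ))^k * ((N^k)^2 * I0) := by rw [mul_pow]; ring_nf
  -- pass to square roots
  rw [hu, Bernstein.monOp_coe, L2, L2]
  have hmono := Real.rpow_le_rpow hI1n hchain (by norm_num : (0:ℝ) ≤ 1/2)
  refine le_trans hmono ?_
  rw [Real.mul_rpow (by positivity) (by positivity),
    Real.mul_rpow (by positivity) hI0n]
  have hNk : (((N^k)^2 : ℝ))^((1:ℝ)/2) = N^(k:ℝ) := by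
    rw [← Real.rpow_natCast (N^k) 2, ← Real.rpow_mul (by positivity)]
    norm_num
  rw [hNk]
  exact le_of_eq (by ring)
end
end

section
/- Let d ≥ 1 and k ∈ ℕ. There exists a constant C = C(d,k) > 0 such that for every N ≥ 1, every function u₀ spectrally localized at scale N, and every admissible monomial operator A of order k, the commutator of H with A satisfies ‖(H∘A − A∘H) u₀‖_{L²(ℝ^d)} ≤ C N^k ‖u₀‖_{L²(ℝ^d)}. -/
open MeasureTheory Complex
open scoped BigOperators ComplexConjugate

noncomputable section

section Infra
variable {d : ℕ}

/-- `f` is (the coercion of) a Schwartz map. -/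
def Sch (d : ℕ) (f : ESp d → ℂ) : Prop := ∃ φ : SchwartzMap (ESp d) ℂ, ⇑φ = f

namespace Sch

lemma smooth {f : ESp d → ℂ} (hf : Sch d f) : ContDiff ℝ ((⊤ : ℕ∞) : WithTop ℕ∞) f := by
  obtain ⟨φ, rfl⟩ := hf; exact φ.smooth ⊤

lemma diff {f : ESp d → ℂ} (hf : Sch d f) : Differentiable ℝ f :=
  hf.smooth.differentiable (by simp)

lemma cont {f : ESp d → ℂ} (hf : Sch d f) : Continuous f := hf.diff.continuous

lemma integrable {f : ESp d → ℂ} (hf : Sch d f) : Integrable f := by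
  obtain ⟨φ, rfl⟩ := hf; exact φ.integrable

lemma bounded {f : ESp d → ℂ} (hf : Sch d f) : ∃ C, ∀ x, ‖f x‖ ≤ C := by
  obtain ⟨φ, rfl⟩ := hf
  exact ⟨SchwartzMap.seminorm ℝ 0 0 φ, fun x => φ.norm_le_seminorm ℝ x⟩

lemma integrable_pow_mul {f : ESp d → ℂ} (hf : Sch d f) (k : ℕ) :
    Integrable (fun x => ‖x‖ ^ k * ‖f x‖) := by
  obtain ⟨φ, rfl⟩ := hf; exact φ.integrable_pow_mul volume k

lemma add {f g : ESp d → ℂ} (hf : Sch d f) (hg : Sch d g) : Sch d (fun x => f x + g x) := by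
  obtain ⟨φ, rfl⟩ := hf; obtain ⟨ψ, rfl⟩ := hg; exact ⟨φ + ψ, rfl⟩

lemma smul (c : ℂ) {f : ESp d → ℂ} (hf : Sch d f) : Sch d (fun x => c * f x) := by
  obtain ⟨φ, rfl⟩ := hf
  exact ⟨c • φ, by funext x; simp [smul_eq_mul]⟩

lemma rsmul (c : ℝ) {f : ESp d → ℂ} (hf : Sch d f) : Sch d (fun x => c • f x) := by
  obtain ⟨φ, rfl⟩ := hf
  exact ⟨c • φ, by funext x; simp⟩

lemma sum {ι : Type*} (s : Finset ι) (F : ι → ESp d → ℂ) (h : ∀ i ∈ s, Sch d (F i)) :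
    Sch d (fun x => ∑ i ∈ s, F i x) := by
  classical
  induction s using Finset.induction_on with
  | empty => exact ⟨0, by funext x; simp⟩
  | @insert a s hx ih =>
      have h1 : Sch d (F a) := h a (Finset.mem_insert_self a s)
      have h2 : Sch d (fun x => ∑ i ∈ s, F i x) :=
        ih fun i hi => h i (Finset.mem_insert_of_mem hi)
      have := h1.add h2
      simpa [Finset.sum_insert hx] using this

lemma pd {f : ESp d → ℂ} (hf : Sch d f) (j : Fin d) : Sch d (pd d j f) := by
  obtain ⟨φ, rfl⟩ := hf
  exact ⟨LineDeriv.lineDerivOp (EuclideanSpace.single j (1:ℝ) : ESp d) φ, by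
    funext x; exact SchwartzMap.lineDerivOp_apply_eq_fderiv _ φ x⟩

lemma xmul {f : ESp d → ℂ} (hf : Sch d f) (j : Fin d) :
    Sch d (fun x => ((x j : ℝ) : ℂ) * f x) := by
  obtain ⟨φ, rfl⟩ := hf
  have hg : Function.HasTemperateGrowth (fun x : ESp d => x j) :=
    (EuclideanSpace.proj (𝕜 := ℝ) j).hasTemperateGrowth
  refine ⟨SchwartzMap.bilinLeftCLM ((ContinuousLinearMap.lsmul ℝ ℝ :
      ℝ →L[ℝ] ℂ →L[ℝ] ℂ).flip) hg φ, ?_⟩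
  funext x
  show ((ContinuousLinearMap.lsmul ℝ ℝ : ℝ →L[ℝ] ℂ →L[ℝ] ℂ).flip) (φ x) (x j) = _
  simp [Complex.real_smul]

end Sch

end Infra
section Deriv
variable {d : ℕ}

lemma pd_add {f g : ESp d → ℂ} (hf : Differentiable ℝ f) (hg : Differentiable ℝ g)
    (j : Fin d) (x : ESp d) :
    pd d j (fun y => f y + g y) x = pd d j f x + pd d j g x := by
  unfold pd
  rw [fderiv_fun_add (hf x) (hg x)]
  rfl

lemma pd_sum {ι : Type*} (s : Finset ι) (F : ι → ESp d → ℂ)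
    (h : ∀ i ∈ s, Differentiable ℝ (F i)) (j : Fin d) (x : ESp d) :
    pd d j (fun y => ∑ i ∈ s, F i y) x = ∑ i ∈ s, pd d j (F i) x := by
  unfold pd
  rw [fderiv_fun_sum (fun i hi => (h i hi) x)]
  simp

lemma pd_const_mul {f : ESp d → ℂ} (hf : Differentiable ℝ f) (c : ℂ) (j : Fin d) (x : ESp d) :
    pd d j (fun y => c * f y) x = c * pd d j f x := by
  unfold pd
  rw [fderiv_const_mul (hf x)]
  rfl

lemma hasFDerivAt_coord (j : Fin d) (x : ESp d) :
    HasFDerivAt (fun y : ESp d => ((y j : ℝ) : ℂ))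
      (Complex.ofRealCLM.comp (EuclideanSpace.proj j)) x :=
  (Complex.ofRealCLM.comp (EuclideanSpace.proj j)).hasFDerivAt

lemma pd_xmul {f : ESp d → ℂ} (hf : Differentiable ℝ f) (jm i : Fin d) (x : ESp d) :
    pd d i (fun y => ((y jm : ℝ) : ℂ) * f y) x
      = (if jm = i then (1:ℂ) else 0) * f x + ((x jm : ℝ) : ℂ) * pd d i f x := by
  unfold pd
  have h : HasFDerivAt (fun y => ((y jm : ℝ) : ℂ) * f y) _ x :=
    (hasFDerivAt_coord jm x).mul (hf x).hasFDerivAt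
  rw [h.fderiv]
  have hs : (Complex.ofRealCLM.comp (EuclideanSpace.proj jm)) (EuclideanSpace.single i 1)
      = (if jm = i then (1:ℂ) else 0) := by
    simp only [ContinuousLinearMap.comp_apply, PiLp.proj_apply,
      EuclideanSpace.single_apply, Complex.ofRealCLM_apply]
    split_ifs with h1 h2 h3 <;> simp_all [eq_comm]
  simp only [ContinuousLinearMap.add_apply, ContinuousLinearMap.smul_apply, hs, smul_eq_mul]
  ring

lemma normsq_eq (x : ESp d) : (‖x‖ ^ 2 : ℝ) = ∑ i : Fin d, (x i) ^ 2 := by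
  rw [EuclideanSpace.norm_eq]
  rw [Real.sq_sqrt (by positivity)]
  congr 1; funext i; simp [Real.norm_eq_abs, sq_abs]

lemma hasFDerivAt_normsq (x : ESp d) :
    HasFDerivAt (fun y : ESp d => (‖y‖ ^ 2 : ℝ))
      (∑ i : Fin d, (2 * x i) • (EuclideanSpace.proj (𝕜 := ℝ) i)) x := by
  have he : (fun y : ESp d => (‖y‖ ^ 2 : ℝ)) = fun y => ∑ i : Fin d, (y i) ^ 2 := by
    funext y; exact normsq_eq y
  rw [he]
  refine HasFDerivAt.fun_sum (fun i _ => ?_)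
  have h1 : HasFDerivAt (fun y : ESp d => (EuclideanSpace.proj (𝕜 := ℝ) i) y
      * (EuclideanSpace.proj (𝕜 := ℝ) i) y) _ x :=
    ((EuclideanSpace.proj (𝕜 := ℝ) i).hasFDerivAt (x := x)).mul
    ((EuclideanSpace.proj (𝕜 := ℝ) i).hasFDerivAt (x := x))
  have : (fun y : ESp d => (EuclideanSpace.proj (𝕜 := ℝ) i) y * (EuclideanSpace.proj (𝕜 := ℝ) i) y)
      = fun y : ESp d => (y i) ^ 2 := by
    funext y; simp [sq]
  rw [this] at h1
  refine h1.congr_fderiv ?_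
  ext v
  simp [two_mul, mul_comm]
  ring

lemma pd_normsq_smul {f : ESp d → ℂ} (hf : Differentiable ℝ f) (j : Fin d) (x : ESp d) :
    pd d j (fun y => (‖y‖ ^ 2 : ℝ) • f y) x
      = (2 * x j : ℝ) • f x + (‖x‖ ^ 2 : ℝ) • pd d j f x := by
  unfold pd
  have h : HasFDerivAt (fun y => (‖y‖ ^ 2 : ℝ) • f y) _ x :=
    (hasFDerivAt_normsq x).smul (hf x).hasFDerivAt
  rw [h.fderiv]
  have hc : (∑ i : Fin d, (2 * x i) • (EuclideanSpace.proj (𝕜 := ℝ) i))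
      (EuclideanSpace.single j 1) = (2 * x j : ℝ) := by
    simp only [ContinuousLinearMap.sum_apply, ContinuousLinearMap.smul_apply,
      PiLp.proj_apply, EuclideanSpace.single_apply, smul_eq_mul]
    rw [Finset.sum_eq_single j]
    · simp
    · intro i _ hij
      simp [hij]
    · simp
  simp only [ContinuousLinearMap.add_apply, ContinuousLinearMap.smul_apply,
    ContinuousLinearMap.smulRight_apply, hc]
  rw [add_comm]

lemma pd_fderiv_apply {f : ESp d → ℂ} (hfd : DifferentiableAt ℝ (fderiv ℝ f) x)
    (i : Fin d) (v : ESp d) :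
    pd d i (fun y => fderiv ℝ f y v) x
      = fderiv ℝ (fderiv ℝ f) x (EuclideanSpace.single i 1) v := by
  unfold pd
  rw [fderiv_clm_apply hfd (differentiableAt_const v)]
  simp

lemma pd_pd_comm {f : ESp d → ℂ} (hf : Sch d f) (i j : Fin d) (x : ESp d) :
    pd d i (pd d j f) x = pd d j (pd d i f) x := by
  have hsym : IsSymmSndFDerivAt ℝ f x :=
    (hf.smooth.contDiffAt).isSymmSndFDerivAt
      (by simp; exact WithTop.coe_le_coe.2 (le_top : (2:ℕ∞) ≤ ⊤))
  have hfd : DifferentiableAt ℝ (fderiv ℝ f) x := by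
    have h2 : ContDiff ℝ ((⊤ : ℕ∞) : WithTop ℕ∞) (fderiv ℝ f) :=
      hf.smooth.fderiv_right (by norm_cast)
    exact (h2.differentiable (by norm_cast)) x
  show pd d i (fun y => fderiv ℝ f y (EuclideanSpace.single j 1)) x
      = pd d j (fun y => fderiv ℝ f y (EuclideanSpace.single i 1)) x
  rw [pd_fderiv_apply hfd, pd_fderiv_apply hfd, hsym]

end Deriv
section HopAlg
variable {d : ℕ}

lemma pd_neg (f : ESp d → ℂ) (j : Fin d) (x : ESp d) :
    pd d j (fun y => -f y) x = -pd d j f x := by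
  unfold pd; rw [fderiv_fun_neg]; rfl

lemma pd_rsmul {f : ESp d → ℂ} (hf : Differentiable ℝ f) (c : ℝ) (j : Fin d) (x : ESp d) :
    pd d j (fun y => c • f y) x = c • pd d j f x := by
  unfold pd; rw [fderiv_fun_const_smul (hf x)]; rfl

namespace Sch

lemma neg {f : ESp d → ℂ} (hf : Sch d f) : Sch d (fun x => -f x) := by
  obtain ⟨φ, rfl⟩ := hf; exact ⟨-φ, rfl⟩

lemma normsq_smul {f : ESp d → ℂ} (hf : Sch d f) :
    Sch d (fun x => (‖x‖ ^ 2 : ℝ) • f x) := by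
  have he : (fun x : ESp d => (‖x‖ ^ 2 : ℝ) • f x)
      = fun x => ∑ i : Fin d, ((x i : ℝ) : ℂ) * (((x i : ℝ) : ℂ) * f x) := by
    funext x
    rw [normsq_eq, Finset.sum_smul]
    congr 1; funext i
    rw [Complex.real_smul]
    push_cast
    ring
  rw [he]
  exact Sch.sum _ _ (fun i _ => (hf.xmul i).xmul i)

lemma lap {f : ESp d → ℂ} (hf : Sch d f) : Sch d (_root_.lap d f) :=
  Sch.sum Finset.univ (fun j => _root_.pd d j (_root_.pd d j f)) (fun j _ => (hf.pd j).pd j)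

lemma hop {f : ESp d → ℂ} (hf : Sch d f) : Sch d (Hop d f) :=
  Sch.add hf.lap.neg hf.normsq_smul

lemma monOp {f : ESp d → ℂ} (hf : Sch d f) (L : List (Bool × Fin d)) :
    Sch d (_root_.monOp d L f) := by
  induction L with
  | nil => exact hf
  | cons a t ih =>
      obtain ⟨b, j⟩ := a
      cases b
      · exact ih.xmul j
      · exact ih.pd j

end Sch

lemma lap_pd {f : ESp d → ℂ} (hf : Sch d f) (j : Fin d) (x : ESp d) :
    lap d (pd d j f) x = pd d j (lap d f) x := by
  unfold lap
  have hsum : pd d j (fun y => ∑ i : Fin d, pd d i (pd d i f) y) x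
      = ∑ i : Fin d, pd d j (pd d i (pd d i f)) x :=
    pd_sum _ _ (fun i _ => ((hf.pd i).pd i).diff) j x
  show ∑ i : Fin d, pd d i (pd d i (pd d j f)) x = pd d j (lap d f) x
  have : pd d j (lap d f) x = ∑ i : Fin d, pd d j (pd d i (pd d i f)) x := hsum
  rw [this]
  refine Finset.sum_congr rfl (fun i _ => ?_)
  have h1 : pd d i (pd d j f) = pd d j (pd d i f) := funext (pd_pd_comm hf i j)
  rw [h1]
  exact pd_pd_comm (hf.pd i) i j x

lemma hop_pd {f : ESp d → ℂ} (hf : Sch d f) (j : Fin d) (x : ESp d) :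
    Hop d (pd d j f) x = pd d j (Hop d f) x - (2 * x j : ℝ) • f x := by
  have hHop : pd d j (Hop d f) x
      = -pd d j (lap d f) x + ((2 * x j : ℝ) • f x + (‖x‖ ^ 2 : ℝ) • pd d j f x) := by
    show pd d j (fun y => -lap d f y + (‖y‖ ^ 2 : ℝ) • f y) x = _
    rw [pd_add (hf.lap.neg.diff) (hf.normsq_smul.diff) j x, pd_neg,
      pd_normsq_smul hf.diff j x]
  show -lap d (pd d j f) x + (‖x‖ ^ 2 : ℝ) • pd d j f x = _
  rw [lap_pd hf j x, hHop]
  abel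

lemma lap_xmul {f : ESp d → ℂ} (hf : Sch d f) (j : Fin d) (x : ESp d) :
    lap d (fun y => ((y j : ℝ) : ℂ) * f y) x
      = 2 * pd d j f x + ((x j : ℝ) : ℂ) * lap d f x := by
  unfold lap
  have h1 : ∀ i : Fin d, pd d i (fun y => ((y j : ℝ) : ℂ) * f y)
      = fun y => (if j = i then (1:ℂ) else 0) * f y + ((y j : ℝ) : ℂ) * pd d i f y :=
    fun i => funext (fun y => pd_xmul hf.diff j i y)
  have h2 : ∀ i : Fin d, pd d i (pd d i (fun y => ((y j : ℝ) : ℂ) * f y)) x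
      = (if j = i then (1:ℂ) else 0) * pd d i f x
        + ((if j = i then (1:ℂ) else 0) * pd d i f x + ((x j : ℝ) : ℂ) * pd d i (pd d i f) x) := by
    intro i
    rw [h1 i]
    rw [pd_add (by
        exact fun y => ((hf.diff y).const_mul _).hasFDerivAt.differentiableAt)
      (by
        have : Sch d (fun y => ((y j : ℝ) : ℂ) * pd d i f y) := (hf.pd i).xmul j
        exact this.diff) i x]
    rw [pd_const_mul hf.diff _ i x, pd_xmul (hf.pd i).diff j i x]
  simp only [h2]
  rw [Finset.sum_add_distrib, Finset.sum_add_distrib]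
  simp only [ite_mul, zero_mul, Finset.sum_ite_eq, Finset.mem_univ, if_true]
  rw [← Finset.mul_sum]
  ring

lemma hop_xmul {f : ESp d → ℂ} (hf : Sch d f) (j : Fin d) (x : ESp d) :
    Hop d (fun y => ((y j : ℝ) : ℂ) * f y) x
      = ((x j : ℝ) : ℂ) * Hop d f x - 2 * pd d j f x := by
  show -lap d (fun y => ((y j : ℝ) : ℂ) * f y) x
      + (‖x‖ ^ 2 : ℝ) • (((x j : ℝ) : ℂ) * f x) = _
  rw [lap_xmul hf j x]
  show _ = ((x j : ℝ) : ℂ) * (-lap d f x + (‖x‖ ^ 2 : ℝ) • f x) - 2 * pd d j f x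
  rw [Complex.real_smul, Complex.real_smul]
  push_cast
  ring

lemma hop_sum {ι : Type*} (s : Finset ι) (F : ι → ESp d → ℂ)
    (h : ∀ i ∈ s, Sch d (F i)) (x : ESp d) :
    Hop d (fun y => ∑ i ∈ s, F i y) x = ∑ i ∈ s, Hop d (F i) x := by
  have hlap : lap d (fun y => ∑ i ∈ s, F i y) x = ∑ i ∈ s, lap d (F i) x := by
    unfold lap
    have h1 : ∀ jj : Fin d, pd d jj (fun y => ∑ i ∈ s, F i y)
        = fun y => ∑ i ∈ s, pd d jj (F i) y :=
      fun jj => funext (fun y => pd_sum s F (fun i hi => (h i hi).diff) jj y)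
    have h2 : ∀ jj : Fin d, pd d jj (pd d jj (fun y => ∑ i ∈ s, F i y)) x
        = ∑ i ∈ s, pd d jj (pd d jj (F i)) x := by
      intro jj
      rw [h1 jj]
      exact pd_sum s _ (fun i hi => ((h i hi).pd jj).diff) jj x
    simp only [h2]
    exact Finset.sum_comm
  show -lap d (fun y => ∑ i ∈ s, F i y) x + (‖x‖ ^ 2 : ℝ) • (∑ i ∈ s, F i x) = _
  rw [hlap, Finset.smul_sum, ← Finset.sum_neg_distrib, ← Finset.sum_add_distrib]
  rfl

lemma hop_rsmul {f : ESp d → ℂ} (hf : Sch d f) (c : ℝ) (x : ESp d) :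
    Hop d (fun y => c • f y) x = c • Hop d f x := by
  have hlap : lap d (fun y => c • f y) x = c • lap d f x := by
    unfold lap
    have h1 : ∀ jj : Fin d, pd d jj (fun y => c • f y) = fun y => c • pd d jj f y :=
      fun jj => funext (fun y => pd_rsmul hf.diff c jj y)
    have h2 : ∀ jj : Fin d, pd d jj (pd d jj (fun y => c • f y)) x
        = c • pd d jj (pd d jj f) x := by
      intro jj
      rw [h1 jj]
      exact pd_rsmul (hf.pd jj).diff c jj x
    simp only [h2]
    rw [Finset.smul_sum]
  show -lap d (fun y => c • f y) x + (‖x‖ ^ 2 : ℝ) • (c • f x) = c • (-lap d f x + (‖x‖ ^ 2 : ℝ) • f x)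
  rw [hlap]
  rw [smul_add, smul_neg, smul_comm]

end HopAlg
section Comm
variable {d : ℕ}

def flipAt : List (Bool × Fin d) → ℕ → List (Bool × Fin d)
  | [], _ => []
  | (b, j) :: t, 0 => (!b, j) :: t
  | a :: t, n+1 => a :: flipAt t n

@[simp] lemma flipAt_length (L : List (Bool × Fin d)) (n : ℕ) :
    (flipAt L n).length = L.length := by
  induction L generalizing n with
  | nil => rfl
  | cons a t ih =>
      obtain ⟨b, j⟩ := a
      cases n with
      | zero => rfl
      | succ n => simpa [flipAt] using ih n

lemma comm_monOp {f : ESp d → ℂ} (hf : Sch d f) (L : List (Bool × Fin d)) (x : ESp d) :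
    Hop d (monOp d L f) x = monOp d L (Hop d f) x
      + ∑ i : Fin L.length, (-2 : ℂ) * monOp d (flipAt L (i : ℕ)) f x := by
  induction L generalizing x with
  | nil => simp [monOp]
  | cons a t ih =>
      obtain ⟨b, j⟩ := a
      set g := monOp d t f with hg_def
      have hg : Sch d g := hf.monOp t
      have hIH : Hop d g = fun y => monOp d t (Hop d f) y
          + ∑ i : Fin t.length, (-2 : ℂ) * monOp d (flipAt t (i : ℕ)) f y :=
        funext (fun y => ih y)
      have hS1 : Sch d (monOp d t (Hop d f)) := hf.hop.monOp t
      have hS2 : Sch d (fun y => ∑ i : Fin t.length,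
          (-2 : ℂ) * monOp d (flipAt t (i : ℕ)) f y) :=
        Sch.sum _ _ (fun i _ => (hf.monOp _).smul (-2))
      cases b
      · -- b = false : multiplication by x j
        show Hop d (fun y => ((y j : ℝ) : ℂ) * g y) x = _
        rw [hop_xmul hg j x, hIH]
        simp only [List.length_cons, Fin.sum_univ_succ]
        have h0 : monOp d (flipAt ((false, j) :: t) ((0 : Fin (t.length + 1)) : ℕ)) f x
            = pd d j g x := rfl
        have hsucc : ∀ i : Fin t.length,
            monOp d (flipAt ((false, j) :: t) ((Fin.succ i : Fin (t.length + 1)) : ℕ)) f x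
              = ((x j : ℝ) : ℂ) * monOp d (flipAt t (i : ℕ)) f x := fun i => rfl
        simp only [h0, hsucc]
        have hms : ((x j : ℝ) : ℂ) * ∑ i : Fin t.length,
            (-2 : ℂ) * monOp d (flipAt t (i : ℕ)) f x
            = ∑ i : Fin t.length, (-2 : ℂ) * (((x j : ℝ) : ℂ) * monOp d (flipAt t (i : ℕ)) f x) := by
          rw [Finset.mul_sum]
          exact Finset.sum_congr rfl (fun i _ => by ring)
        have hmf : monOp d ((false, j) :: t) (Hop d f) x
            = ((x j : ℝ) : ℂ) * monOp d t (Hop d f) x := rfl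
        rw [mul_add, hms, hmf]
        ring
      · -- b = true : partial derivative
        show Hop d (pd d j g) x = _
        rw [hop_pd hg j x, hIH]
        have hpd : pd d j (fun y => monOp d t (Hop d f) y
            + ∑ i : Fin t.length, (-2 : ℂ) * monOp d (flipAt t (i : ℕ)) f y) x
            = pd d j (monOp d t (Hop d f)) x
              + ∑ i : Fin t.length, (-2 : ℂ) * pd d j (monOp d (flipAt t (i : ℕ)) f) x := by
          rw [pd_add hS1.diff hS2.diff j x]
          congr 1
          rw [pd_sum _ _ (fun i _ => ((hf.monOp _).smul (-2)).diff) j x]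
          exact Finset.sum_congr rfl
            (fun i _ => pd_const_mul (hf.monOp _).diff (-2) j x)
        rw [hpd]
        simp only [List.length_cons, Fin.sum_univ_succ]
        have h0 : monOp d (flipAt ((true, j) :: t) ((0 : Fin (t.length + 1)) : ℕ)) f x
            = ((x j : ℝ) : ℂ) * g x := rfl
        have hsucc : ∀ i : Fin t.length,
            monOp d (flipAt ((true, j) :: t) ((Fin.succ i : Fin (t.length + 1)) : ℕ)) f x
              = pd d j (monOp d (flipAt t (i : ℕ)) f) x := fun i => rfl
        simp only [h0, hsucc]
        have hx : (2 * x j : ℝ) • g x = (2 : ℂ) * (((x j : ℝ) : ℂ) * g x) := by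
          rw [Complex.real_smul]; push_cast; ring
        rw [hx]
        have hmt : monOp d ((true, j) :: t) (Hop d f) x
            = pd d j (monOp d t (Hop d f)) x := rfl
        rw [hmt]
        ring

end Comm
section Integral
variable {d : ℕ}

/-- The `L²` inner product. -/
def Ih (d : ℕ) (f g : ESp d → ℂ) : ℂ := ∫ x : ESp d, f x * (starRingEnd ℂ) (g x)

lemma Sch.integrable_mul {f g : ESp d → ℂ} (hf : Sch d f) (hg : Sch d g) :
    Integrable (fun x => f x * g x) := by
  obtain ⟨C, hC⟩ := hg.bounded
  refine Integrable.mono' ((hf.integrable.norm).const_mul C) ?_ ?_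
  · exact (hf.cont.mul hg.cont).aestronglyMeasurable
  · refine Filter.Eventually.of_forall (fun x => ?_)
    rw [norm_mul]
    calc ‖f x‖ * ‖g x‖ ≤ ‖f x‖ * C := by
          exact mul_le_mul_of_nonneg_left (hC x) (norm_nonneg _)
      _ = C * ‖f x‖ := mul_comm _ _

lemma Sch.integrable_mul_conj {f g : ESp d → ℂ} (hf : Sch d f) (hg : Sch d g) :
    Integrable (fun x => f x * (starRingEnd ℂ) (g x)) := by
  obtain ⟨C, hC⟩ := hg.bounded
  refine Integrable.mono' ((hf.integrable.norm).const_mul C) ?_ ?_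
  · exact (hf.cont.mul (Complex.continuous_conj.comp hg.cont)).aestronglyMeasurable
  · refine Filter.Eventually.of_forall (fun x => ?_)
    rw [norm_mul, RCLike.norm_conj]
    calc ‖f x‖ * ‖g x‖ ≤ ‖f x‖ * C := mul_le_mul_of_nonneg_left (hC x) (norm_nonneg _)
      _ = C * ‖f x‖ := mul_comm _ _

lemma Sch.integrable_normsq {f : ESp d → ℂ} (hf : Sch d f) :
    Integrable (fun x => ‖f x‖ ^ 2) := by
  obtain ⟨C, hC⟩ := hf.bounded
  refine Integrable.mono' ((hf.integrable.norm).const_mul C) ?_ ?_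
  · exact ((hf.cont.norm).pow 2).aestronglyMeasurable
  · refine Filter.Eventually.of_forall (fun x => ?_)
    rw [Real.norm_of_nonneg (by positivity), sq]
    calc ‖f x‖ * ‖f x‖ ≤ C * ‖f x‖ :=
      mul_le_mul_of_nonneg_right (hC x) (norm_nonneg _)
      _ = C * ‖f x‖ := rfl

lemma Sch.integrable_xsq_normsq {f : ESp d → ℂ} (hf : Sch d f) :
    Integrable (fun x : ESp d => ‖x‖ ^ 2 * ‖f x‖ ^ 2) := by
  obtain ⟨C, hC⟩ := hf.bounded
  refine Integrable.mono' ((hf.integrable_pow_mul 2).const_mul C) ?_ ?_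
  · exact ((continuous_norm.pow 2).mul ((hf.cont.norm).pow 2)).aestronglyMeasurable
  · refine Filter.Eventually.of_forall (fun x => ?_)
    rw [Real.norm_of_nonneg (by positivity)]
    calc ‖x‖ ^ 2 * ‖f x‖ ^ 2 = ‖f x‖ * (‖x‖ ^ 2 * ‖f x‖) := by ring
      _ ≤ C * (‖x‖ ^ 2 * ‖f x‖) :=
        mul_le_mul_of_nonneg_right (hC x) (by positivity)

/-- Integration by parts. -/
lemma ibp {f g : ESp d → ℂ} (hf : Sch d f) (hg : Sch d g) (j : Fin d) :
    ∫ x : ESp d, pd d j f x * g x = - ∫ x : ESp d, f x * pd d j g x := by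
  have h := integral_mul_fderiv_eq_neg_fderiv_mul_of_integrable
    (𝕜 := ℂ) (μ := (volume : Measure (ESp d))) (f := f) (g := g)
    (v := EuclideanSpace.single j 1)
    ((hf.pd j).integrable_mul hg) (hf.integrable_mul (hg.pd j)) (hf.integrable_mul hg)
    (fun x _ => hf.diff x) (fun x _ => hg.diff x)
  rw [show (∫ x : ESp d, f x * fderiv ℝ g x (EuclideanSpace.single j 1))
    = ∫ x : ESp d, f x * pd d j g x from rfl] at h
  rw [show (∫ x : ESp d, fderiv ℝ f x (EuclideanSpace.single j 1) * g x)
    = ∫ x : ESp d, pd d j f x * g x from rfl] at h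
  rw [h, neg_neg]

lemma pd_conj {g : ESp d → ℂ} (hg : Sch d g) (j : Fin d) (x : ESp d) :
    pd d j (fun y => (starRingEnd ℂ) (g y)) x = (starRingEnd ℂ) (pd d j g x) := by
  unfold pd
  have h2 : HasFDerivAt (fun z : ℂ => (starRingEnd ℂ) z)
      (Complex.conjCLE.toContinuousLinearMap) (g x) :=
    Complex.conjCLE.toContinuousLinearMap.hasFDerivAt
  have h : HasFDerivAt (fun y => (starRingEnd ℂ) (g y))
      ((Complex.conjCLE.toContinuousLinearMap).comp (fderiv ℝ g x)) x :=
    h2.comp x (hg.diff x).hasFDerivAt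
  rw [h.fderiv]
  rfl

lemma diff_conj {g : ESp d → ℂ} (hg : Sch d g) :
    Differentiable ℝ (fun y => (starRingEnd ℂ) (g y)) := by
  intro x
  have h2 : HasFDerivAt (fun z : ℂ => (starRingEnd ℂ) z)
      (Complex.conjCLE.toContinuousLinearMap) (g x) :=
    Complex.conjCLE.toContinuousLinearMap.hasFDerivAt
  exact (h2.comp x (hg.diff x).hasFDerivAt).differentiableAt

/-- Integration by parts, with conjugation. -/
lemma ibp_conj {f g : ESp d → ℂ} (hf : Sch d f) (hg : Sch d g) (j : Fin d) :
    ∫ x : ESp d, pd d j f x * (starRingEnd ℂ) (g x)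
      = - ∫ x : ESp d, f x * (starRingEnd ℂ) (pd d j g x) := by
  have hpdc : ∀ x : ESp d, fderiv ℝ (fun y => (starRingEnd ℂ) (g y)) x (EuclideanSpace.single j 1)
      = (starRingEnd ℂ) (pd d j g x) := fun x => pd_conj hg j x
  have h := integral_mul_fderiv_eq_neg_fderiv_mul_of_integrable
    (𝕜 := ℂ) (μ := (volume : Measure (ESp d))) (f := f)
    (g := fun y => (starRingEnd ℂ) (g y)) (v := EuclideanSpace.single j 1)
    ?_ ?_ (hf.integrable_mul_conj hg) (fun x _ => hf.diff x) (fun x _ => diff_conj hg x)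
  · rw [show (∫ x : ESp d, f x * fderiv ℝ (fun y => (starRingEnd ℂ) (g y)) x
        (EuclideanSpace.single j 1))
      = ∫ x : ESp d, f x * (starRingEnd ℂ) (pd d j g x) from by
        congr 1; funext x; rw [hpdc x]] at h
    rw [h, neg_neg]
    rfl
  · refine (((hf.pd j).integrable_mul_conj hg).congr ?_)
    refine Filter.Eventually.of_forall (fun x => rfl)
  · refine ((hf.integrable_mul_conj (hg.pd j)).congr ?_)
    refine Filter.Eventually.of_forall (fun x => ?_)
    show f x * (starRingEnd ℂ) (pd d j g x)
      = f x * (fderiv ℝ (fun y => (starRingEnd ℂ) (g y)) x) (EuclideanSpace.single j 1)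
    rw [hpdc x]

end Integral
section Symm
variable {d : ℕ}

lemma mul_conj_self (z : ℂ) : z * (starRingEnd ℂ) z = ((‖z‖ ^ 2 : ℝ) : ℂ) := by
  rw [Complex.mul_conj]
  rw [Complex.normSq_eq_norm_sq]

lemma Ih_hop_expand {f g : ESp d → ℂ} (hf : Sch d f) (hg : Sch d g) :
    Ih d (Hop d f) g
      = (∑ j : Fin d, ∫ x : ESp d, pd d j f x * (starRingEnd ℂ) (pd d j g x))
        + ∫ x : ESp d, (‖x‖ ^ 2 : ℝ) • (f x * (starRingEnd ℂ) (g x)) := by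
  have hint1 : ∀ j : Fin d,
      Integrable (fun x : ESp d => -(pd d j (pd d j f) x * (starRingEnd ℂ) (g x))) :=
    fun j => (((hf.pd j).pd j).integrable_mul_conj hg).neg
  have hint2 : Integrable (fun x : ESp d => (‖x‖ ^ 2 : ℝ) • (f x * (starRingEnd ℂ) (g x))) := by
    refine ((hf.normsq_smul).integrable_mul_conj hg).congr
      (Filter.Eventually.of_forall (fun x => smul_mul_assoc _ _ _))
  have hpt : ∀ x : ESp d, Hop d f x * (starRingEnd ℂ) (g x)
      = (∑ j : Fin d, -(pd d j (pd d j f) x * (starRingEnd ℂ) (g x)))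
        + (‖x‖ ^ 2 : ℝ) • (f x * (starRingEnd ℂ) (g x)) := by
    intro x
    show (-lap d f x + (‖x‖ ^ 2 : ℝ) • f x) * (starRingEnd ℂ) (g x) = _
    unfold lap
    rw [add_mul, smul_mul_assoc, neg_mul, Finset.sum_mul, ← Finset.sum_neg_distrib]
  unfold Ih
  simp only [hpt]
  rw [integral_add (integrable_finset_sum _ (fun j _ => hint1 j)) hint2]
  congr 1
  rw [integral_finset_sum _ (fun j _ => hint1 j)]
  refine Finset.sum_congr rfl (fun j _ => ?_)
  rw [integral_neg, ibp_conj (hf.pd j) hg j, neg_neg]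

lemma Ih_hop_expand' {f g : ESp d → ℂ} (hf : Sch d f) (hg : Sch d g) :
    Ih d f (Hop d g)
      = (∑ j : Fin d, ∫ x : ESp d, pd d j f x * (starRingEnd ℂ) (pd d j g x))
        + ∫ x : ESp d, (‖x‖ ^ 2 : ℝ) • (f x * (starRingEnd ℂ) (g x)) := by
  have hint1 : ∀ j : Fin d,
      Integrable (fun x : ESp d => -(f x * (starRingEnd ℂ) (pd d j (pd d j g) x))) :=
    fun j => ((hf.integrable_mul_conj ((hg.pd j).pd j))).neg
  have hint2 : Integrable (fun x : ESp d => (‖x‖ ^ 2 : ℝ) • (f x * (starRingEnd ℂ) (g x))) :=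
    ((hf.normsq_smul).integrable_mul_conj hg).congr
      (Filter.Eventually.of_forall (fun x => smul_mul_assoc _ _ _))
  have hpt : ∀ x : ESp d, f x * (starRingEnd ℂ) (Hop d g x)
      = (∑ j : Fin d, -(f x * (starRingEnd ℂ) (pd d j (pd d j g) x)))
        + (‖x‖ ^ 2 : ℝ) • (f x * (starRingEnd ℂ) (g x)) := by
    intro x
    show f x * (starRingEnd ℂ) (-lap d g x + (‖x‖ ^ 2 : ℝ) • g x) = _
    have h1 : (starRingEnd ℂ) (lap d g x) = ∑ j : Fin d, (starRingEnd ℂ) (pd d j (pd d j g) x) :=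
      map_sum _ _ _
    have h2 : (starRingEnd ℂ) ((‖x‖ ^ 2 : ℝ) • g x) = (‖x‖ ^ 2 : ℝ) • (starRingEnd ℂ) (g x) := by
      rw [Complex.real_smul, Complex.real_smul, map_mul, Complex.conj_ofReal]
    rw [map_add, map_neg, h1, h2, mul_add, mul_neg, Finset.mul_sum, mul_smul_comm,
      ← Finset.sum_neg_distrib]
  unfold Ih
  simp only [hpt]
  rw [integral_add (integrable_finset_sum _ (fun j _ => hint1 j)) hint2]
  congr 1
  rw [integral_finset_sum _ (fun j _ => hint1 j)]
  refine Finset.sum_congr rfl (fun j _ => ?_)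
  rw [integral_neg, ← ibp_conj hf (hg.pd j) j]

lemma Ih_hop_symm {f g : ESp d → ℂ} (hf : Sch d f) (hg : Sch d g) :
    Ih d (Hop d f) g = Ih d f (Hop d g) := by
  rw [Ih_hop_expand hf hg, Ih_hop_expand' hf hg]

lemma Ih_hop_self_eq {f : ESp d → ℂ} (hf : Sch d f) :
    Ih d (Hop d f) f
      = (((∑ j : Fin d, ∫ x : ESp d, ‖pd d j f x‖ ^ 2)
          + ∫ x : ESp d, ‖x‖ ^ 2 * ‖f x‖ ^ 2 : ℝ) : ℂ) := by
  rw [Ih_hop_expand hf hf]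
  have h1 : ∀ j : Fin d, (∫ x : ESp d, pd d j f x * (starRingEnd ℂ) (pd d j f x))
      = ((∫ x : ESp d, ‖pd d j f x‖ ^ 2 : ℝ) : ℂ) := by
    intro j
    rw [show (fun x : ESp d => pd d j f x * (starRingEnd ℂ) (pd d j f x))
      = fun x : ESp d => ((‖pd d j f x‖ ^ 2 : ℝ) : ℂ) from funext (fun x => mul_conj_self _)]
    exact integral_ofReal
  have h2 : (∫ x : ESp d, (‖x‖ ^ 2 : ℝ) • (f x * (starRingEnd ℂ) (f x)))
      = ((∫ x : ESp d, ‖x‖ ^ 2 * ‖f x‖ ^ 2 : ℝ) : ℂ) := by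
    rw [show (fun x : ESp d => (‖x‖ ^ 2 : ℝ) • (f x * (starRingEnd ℂ) (f x)))
      = fun x : ESp d => ((‖x‖ ^ 2 * ‖f x‖ ^ 2 : ℝ) : ℂ) from funext (fun x => by
        rw [mul_conj_self, Complex.real_smul]; norm_cast)]
    exact integral_ofReal
  simp only [h1, h2]
  push_cast
  ring

lemma hop_self_re_nonneg_parts {f : ESp d → ℂ} (hf : Sch d f) :
    (Ih d (Hop d f) f).re
      = (∑ j : Fin d, ∫ x : ESp d, ‖pd d j f x‖ ^ 2) + ∫ x : ESp d, ‖x‖ ^ 2 * ‖f x‖ ^ 2 := by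
  rw [Ih_hop_self_eq hf, Complex.ofReal_re]

lemma pd_sq_le_hop {f : ESp d → ℂ} (hf : Sch d f) (j : Fin d) :
    ∫ x : ESp d, ‖pd d j f x‖ ^ 2 ≤ (Ih d (Hop d f) f).re := by
  rw [hop_self_re_nonneg_parts hf]
  have h1 : ∫ x : ESp d, ‖pd d j f x‖ ^ 2
      ≤ ∑ i : Fin d, ∫ x : ESp d, ‖pd d i f x‖ ^ 2 :=
    Finset.single_le_sum (f := fun i => ∫ x : ESp d, ‖pd d i f x‖ ^ 2)
      (fun i _ => integral_nonneg (fun x => by positivity)) (Finset.mem_univ j)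
  have h2 : (0:ℝ) ≤ ∫ x : ESp d, ‖x‖ ^ 2 * ‖f x‖ ^ 2 :=
    integral_nonneg (fun x => by positivity)
  linarith

lemma xsq_le_hop {f : ESp d → ℂ} (hf : Sch d f) (j : Fin d) :
    ∫ x : ESp d, ‖((x j : ℝ) : ℂ) * f x‖ ^ 2 ≤ (Ih d (Hop d f) f).re := by
  rw [hop_self_re_nonneg_parts hf]
  have h1 : ∫ x : ESp d, ‖((x j : ℝ) : ℂ) * f x‖ ^ 2
      ≤ ∫ x : ESp d, ‖x‖ ^ 2 * ‖f x‖ ^ 2 := by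
    refine integral_mono ((hf.xmul j).integrable_normsq) (hf.integrable_xsq_normsq) ?_
    intro x
    show ‖((x j : ℝ) : ℂ) * f x‖ ^ 2 ≤ ‖x‖ ^ 2 * ‖f x‖ ^ 2
    rw [norm_mul, mul_pow, Complex.norm_real, Real.norm_eq_abs, _root_.sq_abs (x j)]
    refine mul_le_mul_of_nonneg_right ?_ (by positivity)
    rw [normsq_eq]
    exact Finset.single_le_sum (f := fun i => (x i)^2) (fun i _ => sq_nonneg _)
      (Finset.mem_univ j)
  have h2 : (0:ℝ) ≤ ∑ i : Fin d, ∫ x : ESp d, ‖pd d i f x‖ ^ 2 :=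
    Finset.sum_nonneg (fun i _ => integral_nonneg (fun x => by positivity))
  linarith

end Symm
section L2lem
variable {d : ℕ}

lemma integral_normsq_nonneg (f : ESp d → ℂ) : 0 ≤ ∫ x : ESp d, ‖f x‖ ^ 2 :=
  integral_nonneg (fun x => by positivity)

lemma L2_nonneg (f : ESp d → ℂ) : 0 ≤ L2 d f :=
  Real.rpow_nonneg (integral_normsq_nonneg f) _

lemma L2_sq (f : ESp d → ℂ) : (L2 d f) ^ 2 = ∫ x : ESp d, ‖f x‖ ^ 2 := by
  unfold L2
  rw [← Real.rpow_natCast ((∫ x : ESp d, ‖f x‖ ^ 2) ^ ((1:ℝ)/2)) 2,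
    ← Real.rpow_mul (integral_normsq_nonneg f)]
  norm_num

lemma rpow_half_sq {a : ℝ} (ha : 0 ≤ a) : ((a ^ 2 : ℝ)) ^ ((1:ℝ)/2) = a := by
  rw [← Real.rpow_natCast a 2, ← Real.rpow_mul ha]
  norm_num

lemma L2_le_of_sq_le {f : ESp d → ℂ} {b : ℝ} (hb : 0 ≤ b)
    (h : ∫ x : ESp d, ‖f x‖ ^ 2 ≤ b ^ 2) : L2 d f ≤ b := by
  have := Real.rpow_le_rpow (integral_normsq_nonneg f) h (by norm_num : (0:ℝ) ≤ 1/2)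
  rwa [rpow_half_sq hb] at this

lemma sch_memL2 {f : ESp d → ℂ} (hf : Sch d f) :
    MemLp (fun x => ‖f x‖) (ENNReal.ofReal 2) (volume : Measure (ESp d)) := by
  rw [show ENNReal.ofReal 2 = 2 by norm_num]
  exact (memLp_two_iff_integrable_sq hf.cont.norm.aestronglyMeasurable).2
    (by simpa [sq] using hf.integrable_normsq)

lemma sch_CS {f g : ESp d → ℂ} (hf : Sch d f) (hg : Sch d g) :
    ∫ x : ESp d, ‖f x‖ * ‖g x‖ ≤ L2 d f * L2 d g := by
  have hpq : Real.HolderConjugate 2 2 := Real.HolderConjugate.two_two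
  have h := integral_mul_le_Lp_mul_Lq_of_nonneg (μ := (volume : Measure (ESp d))) hpq
    (f := fun x => ‖f x‖) (g := fun x => ‖g x‖)
    (Filter.Eventually.of_forall (fun x => norm_nonneg _))
    (Filter.Eventually.of_forall (fun x => norm_nonneg _))
    (sch_memL2 hf) (sch_memL2 hg)
  have he : ∀ h' : ESp d → ℂ, (∫ x : ESp d, ‖h' x‖ ^ (2:ℝ)) = ∫ x : ESp d, ‖h' x‖ ^ 2 := by
    intro h'
    congr 1; funext x
    rw [show (2:ℝ) = ((2:ℕ):ℝ) by norm_num, Real.rpow_natCast]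
  rw [he f, he g] at h
  exact h

lemma Ih_norm_le {f g : ESp d → ℂ} (hf : Sch d f) (hg : Sch d g) :
    ‖Ih d f g‖ ≤ L2 d f * L2 d g := by
  refine le_trans (norm_integral_le_integral_norm _) ?_
  have : (∫ x : ESp d, ‖f x * (starRingEnd ℂ) (g x)‖) = ∫ x : ESp d, ‖f x‖ * ‖g x‖ := by
    congr 1; funext x; rw [norm_mul, RCLike.norm_conj]
  rw [this]
  exact sch_CS hf hg

lemma Ih_self_eq (f : ESp d → ℂ) : Ih d f f = ((∫ x : ESp d, ‖f x‖ ^ 2 : ℝ) : ℂ) := by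
  unfold Ih
  rw [show (fun x : ESp d => f x * (starRingEnd ℂ) (f x))
    = fun x : ESp d => ((‖f x‖ ^ 2 : ℝ) : ℂ) from funext (fun x => mul_conj_self _)]
  exact integral_ofReal

lemma L2_smul (c : ℂ) (f : ESp d → ℂ) : L2 d (fun x => c * f x) = ‖c‖ * L2 d f := by
  unfold L2
  have h : (∫ x : ESp d, ‖c * f x‖ ^ 2) = ‖c‖ ^ 2 * ∫ x : ESp d, ‖f x‖ ^ 2 := by
    rw [← integral_const_mul]
    congr 1; funext x; rw [norm_mul]; ring
  rw [h, Real.mul_rpow (by positivity) (integral_normsq_nonneg f), rpow_half_sq (norm_nonneg c)]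

lemma L2_add_le {f g : ESp d → ℂ} (hf : Sch d f) (hg : Sch d g) :
    L2 d (fun x => f x + g x) ≤ L2 d f + L2 d g := by
  have hint_cross : Integrable (fun x : ESp d => ‖f x‖ * ‖g x‖) := by
    obtain ⟨C, hC⟩ := hg.bounded
    refine Integrable.mono' ((hf.integrable.norm).const_mul C) ?_ ?_
    · exact (hf.cont.norm.mul hg.cont.norm).aestronglyMeasurable
    · refine Filter.Eventually.of_forall (fun x => ?_)
      rw [Real.norm_of_nonneg (by positivity)]
      calc ‖f x‖ * ‖g x‖ ≤ ‖f x‖ * C := mul_le_mul_of_nonneg_left (hC x) (norm_nonneg _)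
        _ = C * ‖f x‖ := mul_comm _ _
  have key : ∫ x : ESp d, ‖f x + g x‖ ^ 2 ≤ (L2 d f + L2 d g) ^ 2 := by
    have h1 : ∫ x : ESp d, ‖f x + g x‖ ^ 2
        ≤ ∫ x : ESp d, (‖f x‖ ^ 2 + 2 * (‖f x‖ * ‖g x‖) + ‖g x‖ ^ 2) := by
      refine integral_mono ((hf.add hg).integrable_normsq) ?_ ?_
      · exact (hf.integrable_normsq.add (hint_cross.const_mul 2)).add hg.integrable_normsq
      · intro x
        show ‖f x + g x‖ ^ 2 ≤ ‖f x‖ ^ 2 + 2 * (‖f x‖ * ‖g x‖) + ‖g x‖ ^ 2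
        have := norm_add_le (f x) (g x)
        nlinarith [norm_nonneg (f x + g x), norm_nonneg (f x), norm_nonneg (g x)]
    have h2 : ∫ x : ESp d, (‖f x‖ ^ 2 + 2 * (‖f x‖ * ‖g x‖) + ‖g x‖ ^ 2)
        = (∫ x : ESp d, ‖f x‖ ^ 2) + 2 * (∫ x : ESp d, ‖f x‖ * ‖g x‖)
          + ∫ x : ESp d, ‖g x‖ ^ 2 := by
      rw [integral_add (f := fun x => ‖f x‖ ^ 2 + 2 * (‖f x‖ * ‖g x‖))
          (g := fun x => ‖g x‖ ^ 2)
          (hf.integrable_normsq.add (hint_cross.const_mul 2)) hg.integrable_normsq,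
        integral_add (f := fun x => ‖f x‖ ^ 2) (g := fun x => 2 * (‖f x‖ * ‖g x‖))
          hf.integrable_normsq (hint_cross.const_mul 2), integral_const_mul]
    have h3 := sch_CS hf hg
    have h4 := L2_sq f; have h5 := L2_sq g
    rw [h2] at h1
    nlinarith [L2_nonneg f, L2_nonneg g]
  exact L2_le_of_sq_le (add_nonneg (L2_nonneg f) (L2_nonneg g)) key

lemma L2_sum_le {ι : Type*} (s : Finset ι) (F : ι → ESp d → ℂ)
    (h : ∀ i ∈ s, Sch d (F i)) :
    L2 d (fun x => ∑ i ∈ s, F i x) ≤ ∑ i ∈ s, L2 d (F i) := by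
  classical
  induction s using Finset.induction_on with
  | empty =>
      simp only [Finset.sum_empty]
      have : L2 d (fun _ : ESp d => (0:ℂ)) = 0 := by
        unfold L2
        simp [Real.zero_rpow (by norm_num : (1:ℝ)/2 ≠ 0)]
      exact le_of_eq this
  | @insert a s ha ih =>
      have h1 : Sch d (F a) := h a (Finset.mem_insert_self a s)
      have h2 : Sch d (fun x => ∑ i ∈ s, F i x) :=
        Sch.sum _ _ (fun i hi => h i (Finset.mem_insert_of_mem hi))
      calc L2 d (fun x => ∑ i ∈ insert a s, F i x)
          = L2 d (fun x => F a x + ∑ i ∈ s, F i x) := by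
            congr 1; funext x; exact Finset.sum_insert ha
        _ ≤ L2 d (F a) + L2 d (fun x => ∑ i ∈ s, F i x) := L2_add_le h1 h2
        _ ≤ L2 d (F a) + ∑ i ∈ s, L2 d (F i) := by
            have := ih (fun i hi => h i (Finset.mem_insert_of_mem hi))
            linarith
        _ = ∑ i ∈ insert a s, L2 d (F i) :=
            (Finset.sum_insert (f := fun i => L2 d (F i)) ha).symm

lemma Ih_sum_sum {ι : Type*} (s : Finset ι) (F : ι → ESp d → ℂ)
    (h : ∀ i ∈ s, Sch d (F i)) :
    Ih d (fun x => ∑ i ∈ s, F i x) (fun x => ∑ i ∈ s, F i x)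
      = ∑ i ∈ s, ∑ l ∈ s, Ih d (F i) (F l) := by
  unfold Ih
  have hpt : ∀ x : ESp d, (∑ i ∈ s, F i x) * (starRingEnd ℂ) (∑ l ∈ s, F l x)
      = ∑ i ∈ s, ∑ l ∈ s, F i x * (starRingEnd ℂ) (F l x) := by
    intro x
    rw [map_sum, Finset.sum_mul_sum]
  simp only [hpt]
  rw [integral_finset_sum _ (fun i hi => integrable_finset_sum _
    (fun l hl => (h i hi).integrable_mul_conj (h l hl)))]
  exact Finset.sum_congr rfl (fun i hi =>
    integral_finset_sum _ (fun l hl => (h i hi).integrable_mul_conj (h l hl)))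

lemma pythagoras {ι : Type*} [DecidableEq ι] (s : Finset ι) (F : ι → ESp d → ℂ)
    (h : ∀ i ∈ s, Sch d (F i))
    (horth : ∀ i ∈ s, ∀ l ∈ s, i ≠ l → Ih d (F i) (F l) = 0) :
    ∫ x : ESp d, ‖∑ i ∈ s, F i x‖ ^ 2 = ∑ i ∈ s, ∫ x : ESp d, ‖F i x‖ ^ 2 := by
  have h1 := Ih_sum_sum s F h
  have h2 : ∀ i ∈ s, (∑ l ∈ s, Ih d (F i) (F l)) = Ih d (F i) (F i) := by
    intro i hi
    rw [Finset.sum_eq_single i]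
    · intro l hl hne; exact horth i hi l hl (Ne.symm hne)
    · intro hni; exact absurd hi hni
  rw [Finset.sum_congr rfl h2] at h1
  have h3 : ((∫ x : ESp d, ‖∑ i ∈ s, F i x‖ ^ 2 : ℝ) : ℂ)
      = ((∑ i ∈ s, ∫ x : ESp d, ‖F i x‖ ^ 2 : ℝ) : ℂ) := by
    rw [← Ih_self_eq]
    rw [h1]
    push_cast
    exact Finset.sum_congr rfl (fun i hi => Ih_self_eq (F i))
  exact_mod_cast h3

lemma eigen_orth {f g : ESp d → ℂ} {lam nu : ℝ} (hf : Sch d f) (hg : Sch d g)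
    (hef : ∀ x, Hop d f x = lam • f x) (heg : ∀ x, Hop d g x = nu • g x)
    (hne : lam ≠ nu) : Ih d f g = 0 := by
  have h1 : Ih d (Hop d f) g = (lam : ℂ) * Ih d f g := by
    unfold Ih
    rw [← integral_const_mul]
    congr 1; funext x
    rw [hef x, Complex.real_smul]; ring
  have h2 : Ih d f (Hop d g) = (nu : ℂ) * Ih d f g := by
    unfold Ih
    rw [← integral_const_mul]
    congr 1; funext x
    rw [heg x, Complex.real_smul, map_mul, Complex.conj_ofReal]; ring
  have h3 := Ih_hop_symm hf hg
  rw [h1, h2] at h3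
  have h4 : ((lam : ℂ) - (nu : ℂ)) * Ih d f g = 0 := by rw [sub_mul, h3]; ring
  rcases mul_eq_zero.1 h4 with h | h
  · exact absurd (by exact_mod_cast sub_eq_zero.1 h : lam = nu) hne
  · exact h

end L2lem
section Loc
variable {d : ℕ}

lemma loc_sch {N : ℝ} {m : ℕ} {μ : Fin m → ℝ} {e : Fin m → ESp d → ℂ}
    (hloc : Localized d N μ e) (j : Fin m) : Sch d (e j) := (hloc j).1.2.1

lemma loc_scaled {N : ℝ} {m : ℕ} {μ : Fin m → ℝ} {e : Fin m → ESp d → ℂ}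
    (hloc : Localized d N μ e) :
    Localized d N μ (fun j => fun x => (μ j ^ 2 : ℝ) • e j x) := by
  intro j
  refine ⟨⟨(hloc j).1.1, ?_, ?_⟩, (hloc j).2.1, (hloc j).2.2⟩
  · exact Sch.rsmul _ (loc_sch hloc j)
  · intro x
    rw [hop_rsmul (loc_sch hloc j) _ x, (hloc j).1.2.2 x, smul_comm]

lemma hop_u_eq {N : ℝ} {m : ℕ} {μ : Fin m → ℝ} {e : Fin m → ESp d → ℂ}
    (hloc : Localized d N μ e) (x : ESp d) :
    Hop d (fun y => ∑ j, e j y) x = ∑ j, (μ j ^ 2 : ℝ) • e j x := by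
  rw [hop_sum Finset.univ (fun j => e j) (fun j _ => loc_sch hloc j) x]
  exact Finset.sum_congr rfl (fun j _ => (hloc j).1.2.2 x)

lemma HL2 {N : ℝ} {m : ℕ} {μ : Fin m → ℝ} {e : Fin m → ESp d → ℂ} (hN : 1 ≤ N)
    (hloc : Localized d N μ e) :
    L2 d (fun x => ∑ j, (μ j ^ 2 : ℝ) • e j x)
      ≤ (4 * N ^ 2) * L2 d (fun x => ∑ j, e j x) := by
  classical
  have hSch : ∀ j, Sch d (e j) := fun j => loc_sch hloc j
  have hN0 : (0:ℝ) < N := lt_of_lt_of_le one_pos hN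
  set S : Finset ℝ := Finset.univ.image μ with hS
  set F : ℝ → ESp d → ℂ :=
    fun t x => ∑ j ∈ Finset.univ.filter (fun j => μ j = t), e j x with hF
  have hSchF : ∀ t, Sch d (F t) := fun t => Sch.sum _ _ (fun j _ => hSch j)
  have ha : ∀ x : ESp d, (∑ j, e j x) = ∑ t ∈ S, F t x := by
    intro x
    rw [← Finset.sum_fiberwise_of_maps_to (g := μ)
      (fun j _ => Finset.mem_image_of_mem μ (Finset.mem_univ j)) (fun j => e j x)]
  have hb : ∀ x : ESp d, (∑ j, (μ j ^ 2 : ℝ) • e j x)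
      = ∑ t ∈ S, (t ^ 2 : ℝ) • F t x := by
    intro x
    rw [← Finset.sum_fiberwise_of_maps_to (g := μ)
      (fun j _ => Finset.mem_image_of_mem μ (Finset.mem_univ j))
      (fun j => (μ j ^ 2 : ℝ) • e j x)]
    refine Finset.sum_congr rfl (fun t _ => ?_)
    rw [Finset.smul_sum]
    refine Finset.sum_congr rfl (fun j hj => ?_)
    rw [(Finset.mem_filter.1 hj).2]
  have hrange : ∀ t ∈ S, N ≤ t ∧ t ≤ 2 * N := by
    intro t ht
    obtain ⟨j, _, rfl⟩ := Finset.mem_image.1 ht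
    exact ⟨(hloc j).2.1, (hloc j).2.2⟩
  have heig : ∀ t, ∀ x : ESp d, Hop d (F t) x = (t ^ 2 : ℝ) • F t x := by
    intro t x
    show Hop d (fun y => ∑ j ∈ Finset.univ.filter (fun j => μ j = t), e j y) x = _
    rw [hop_sum _ _ (fun j _ => hSch j) x, Finset.smul_sum]
    refine Finset.sum_congr rfl (fun j hj => ?_)
    rw [(hloc j).1.2.2 x, (Finset.mem_filter.1 hj).2]
  have hsqne : ∀ t ∈ S, ∀ t' ∈ S, t ≠ t' → (t ^ 2 : ℝ) ≠ t' ^ 2 := by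
    intro t ht t' ht' hne hcon
    apply hne
    have h0t : 0 ≤ t := le_trans (le_of_lt hN0) (hrange t ht).1
    have h0t' : 0 ≤ t' := le_trans (le_of_lt hN0) (hrange t' ht').1
    rw [← Real.sqrt_sq h0t, ← Real.sqrt_sq h0t', hcon]
  have horth : ∀ t ∈ S, ∀ t' ∈ S, t ≠ t' → Ih d (F t) (F t') = 0 :=
    fun t ht t' ht' hne =>
      eigen_orth (hSchF t) (hSchF t') (heig t) (heig t') (hsqne t ht t' ht' hne)
  -- the scaled family
  have hSchG : ∀ t, Sch d (fun x => (t ^ 2 : ℝ) • F t x) := fun t => (hSchF t).rsmul _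
  have heigG : ∀ t, ∀ x : ESp d,
      Hop d (fun y => (t ^ 2 : ℝ) • F t y) x = (t ^ 2 : ℝ) • ((t ^ 2 : ℝ) • F t x) := by
    intro t x
    rw [hop_rsmul (hSchF t) _ x, heig t x]
  have horthG : ∀ t ∈ S, ∀ t' ∈ S, t ≠ t' →
      Ih d (fun x => (t ^ 2 : ℝ) • F t x) (fun x => (t' ^ 2 : ℝ) • F t' x) = 0 :=
    fun t ht t' ht' hne =>
      eigen_orth (hSchG t) (hSchG t') (heigG t) (heigG t') (hsqne t ht t' ht' hne)
  have hP1 : ∫ x : ESp d, ‖∑ t ∈ S, F t x‖ ^ 2 = ∑ t ∈ S, ∫ x : ESp d, ‖F t x‖ ^ 2 :=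
    pythagoras S F (fun t _ => hSchF t) horth
  have hP2 : ∫ x : ESp d, ‖∑ t ∈ S, (t ^ 2 : ℝ) • F t x‖ ^ 2
      = ∑ t ∈ S, ∫ x : ESp d, ‖(t ^ 2 : ℝ) • F t x‖ ^ 2 :=
    pythagoras S (fun t x => (t ^ 2 : ℝ) • F t x) (fun t _ => hSchG t) horthG
  have hGt : ∀ t, (∫ x : ESp d, ‖(t ^ 2 : ℝ) • F t x‖ ^ 2)
      = (t ^ 2) ^ 2 * ∫ x : ESp d, ‖F t x‖ ^ 2 := by
    intro t
    rw [← integral_const_mul]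
    congr 1; funext x
    rw [norm_smul, Real.norm_eq_abs, _root_.abs_of_nonneg (sq_nonneg t), mul_pow]
  have hL2b : 0 ≤ (4 * N ^ 2) * L2 d (fun x => ∑ j, e j x) :=
    mul_nonneg (by positivity) (L2_nonneg _)
  refine L2_le_of_sq_le hL2b ?_
  have hrw : (∫ x : ESp d, ‖∑ j, (μ j ^ 2 : ℝ) • e j x‖ ^ 2)
      = ∑ t ∈ S, (t ^ 2) ^ 2 * ∫ x : ESp d, ‖F t x‖ ^ 2 := by
    rw [show (∫ x : ESp d, ‖∑ j, (μ j ^ 2 : ℝ) • e j x‖ ^ 2)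
      = ∫ x : ESp d, ‖∑ t ∈ S, (t ^ 2 : ℝ) • F t x‖ ^ 2 from by
        congr 1; funext x; rw [hb x]]
    rw [hP2]
    exact Finset.sum_congr rfl (fun t _ => hGt t)
  rw [hrw]
  have hbound : ∑ t ∈ S, (t ^ 2) ^ 2 * ∫ x : ESp d, ‖F t x‖ ^ 2
      ≤ ∑ t ∈ S, (16 * N ^ 4) * ∫ x : ESp d, ‖F t x‖ ^ 2 := by
    refine Finset.sum_le_sum (fun t ht => ?_)
    refine mul_le_mul_of_nonneg_right ?_ (integral_normsq_nonneg _)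
    have h1 := (hrange t ht).1
    have h2 := (hrange t ht).2
    have h3 : (0:ℝ) ≤ t := le_trans (le_of_lt hN0) h1
    have ht2 : t ^ 2 ≤ 4 * N ^ 2 := by nlinarith
    nlinarith [ht2, sq_nonneg t, sq_nonneg N]
  refine le_trans hbound ?_
  rw [← Finset.mul_sum, ← hP1]
  have huu : (∫ x : ESp d, ‖∑ t ∈ S, F t x‖ ^ 2)
      = (L2 d (fun x => ∑ j, e j x)) ^ 2 := by
    rw [L2_sq]
    congr 1; funext x; rw [ha x]
  rw [huu]
  have : ((4 * N ^ 2) * L2 d (fun x => ∑ j, e j x)) ^ 2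
      = 16 * N ^ 4 * (L2 d (fun x => ∑ j, e j x)) ^ 2 := by ring
  rw [this]

end Loc
section Key
variable {d : ℕ}

lemma key (d : ℕ) : ∀ k : ℕ, ∃ C : ℝ, 0 < C ∧ ∀ N : ℝ, 1 ≤ N →
    ∀ (m : ℕ) (μ : Fin m → ℝ) (e : Fin m → ESp d → ℂ), Localized d N μ e →
    ∀ B : List (Bool × Fin d), B.length = k →
      L2 d (monOp d B (fun x => ∑ j, e j x))
        ≤ C * N ^ k * L2 d (fun x => ∑ j, e j x) := by
  intro k
  induction k with
  | zero =>
      refine ⟨1, one_pos, ?_⟩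
      intro N hN m μ e hloc B hB
      rw [List.length_eq_zero_iff.1 hB]
      simp only [pow_zero, mul_one, one_mul]
      exact le_of_eq rfl
  | succ k IH =>
      obtain ⟨C, hCpos, hC⟩ := IH
      have hsq_pos : (0:ℝ) < 4 + 2 * k := by positivity
      refine ⟨C * Real.sqrt (4 + 2 * k), by positivity, ?_⟩
      intro N hN m μ e hloc B hB
      have hN0 : (0:ℝ) < N := lt_of_lt_of_le one_pos hN
      cases B with
      | nil => simp at hB
      | cons a t =>
        have ht : t.length = k := by simpa using hB
        have hSu : Sch d (fun x : ESp d => ∑ j, e j x) :=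
          Sch.sum _ _ (fun j _ => loc_sch hloc j)
        have hSg : Sch d (monOp d t (fun x : ESp d => ∑ j, e j x)) := hSu.monOp t
        have hg_bd : L2 d (monOp d t (fun x : ESp d => ∑ j, e j x))
            ≤ C * N ^ k * L2 d (fun x : ESp d => ∑ j, e j x) := hC N hN m μ e hloc t ht
        have hmon_hop : L2 d (monOp d t (Hop d (fun x : ESp d => ∑ j, e j x)))
            ≤ C * N ^ k * (4 * N ^ 2 * L2 d (fun x : ESp d => ∑ j, e j x)) := by
          have heq : monOp d t (Hop d (fun x : ESp d => ∑ j, e j x))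
              = monOp d t (fun x => ∑ j, (μ j ^ 2 : ℝ) • e j x) :=
            congrArg (monOp d t) (funext (fun x => hop_u_eq hloc x))
          rw [heq]
          have h2 := hC N hN m μ _ (loc_scaled hloc) t ht
          refine le_trans h2 ?_
          exact mul_le_mul_of_nonneg_left (HL2 hN hloc) (by positivity)
        have hcomm : L2 d (fun x => ∑ i : Fin t.length,
              (-2:ℂ) * monOp d (flipAt t (i:ℕ)) (fun y : ESp d => ∑ j, e j y) x)
            ≤ 2 * k * (C * N ^ k * L2 d (fun x : ESp d => ∑ j, e j x)) := by
          refine le_trans (L2_sum_le Finset.univ _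
            (fun i _ => ((hSu.monOp _).smul (-2)))) ?_
          have hterm : ∀ i : Fin t.length,
              L2 d (fun x => (-2:ℂ) * monOp d (flipAt t (i:ℕ))
                  (fun y : ESp d => ∑ j, e j y) x)
              ≤ 2 * (C * N ^ k * L2 d (fun x : ESp d => ∑ j, e j x)) := by
            intro i
            rw [L2_smul]
            have h3 := hC N hN m μ e hloc (flipAt t (i:ℕ)) (by rw [flipAt_length, ht])
            have hn2 : ‖(-2:ℂ)‖ = 2 := by simp
            rw [hn2]
            linarith
          refine le_trans (Finset.sum_le_sum (fun i _ => hterm i)) ?_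
          rw [Finset.sum_const, Finset.card_univ, Fintype.card_fin, nsmul_eq_mul, ht]
          exact le_of_eq (by ring)
        have hHopg : L2 d (Hop d (monOp d t (fun x : ESp d => ∑ j, e j x)))
            ≤ (C * (4 + 2 * k)) * N ^ (k + 2) * L2 d (fun x : ESp d => ∑ j, e j x) := by
          have heq : L2 d (Hop d (monOp d t (fun x : ESp d => ∑ j, e j x)))
              = L2 d (fun x => monOp d t (Hop d (fun y : ESp d => ∑ j, e j y)) x
                + ∑ i : Fin t.length, (-2:ℂ) * monOp d (flipAt t (i:ℕ))
                    (fun y : ESp d => ∑ j, e j y) x) := by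
            congr 1; funext x; exact comm_monOp hSu t x
          rw [heq]
          refine le_trans (L2_add_le (hSu.hop.monOp t)
            (Sch.sum _ _ (fun i _ => (hSu.monOp _).smul (-2)))) ?_
          have hNk : N ^ k ≤ N ^ (k + 2) := pow_le_pow_right₀ hN (by omega)
          have h4 : C * N ^ k * L2 d (fun x : ESp d => ∑ j, e j x)
              ≤ C * N ^ (k + 2) * L2 d (fun x : ESp d => ∑ j, e j x) := by
            refine mul_le_mul_of_nonneg_right ?_ (L2_nonneg _)
            exact mul_le_mul_of_nonneg_left hNk (le_of_lt hCpos)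
          have h5 : (2 * (k:ℝ)) * (C * N ^ k * L2 d (fun x : ESp d => ∑ j, e j x))
              ≤ (2 * (k:ℝ)) * (C * N ^ (k + 2) * L2 d (fun x : ESp d => ∑ j, e j x)) :=
            mul_le_mul_of_nonneg_left h4 (by positivity)
          have e1 : C * N ^ k * (4 * N ^ 2 * L2 d (fun x : ESp d => ∑ j, e j x))
              = 4 * (C * N ^ (k + 2) * L2 d (fun x : ESp d => ∑ j, e j x)) := by
            rw [pow_add]; ring
          have e2 : (C * (4 + 2 * k)) * N ^ (k + 2) * L2 d (fun x : ESp d => ∑ j, e j x)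
              = 4 * (C * N ^ (k + 2) * L2 d (fun x : ESp d => ∑ j, e j x))
                + (2 * (k:ℝ)) * (C * N ^ (k + 2) * L2 d (fun x : ESp d => ∑ j, e j x)) := by
            ring
          rw [e2]
          refine le_trans (add_le_add hmon_hop hcomm) ?_
          rw [e1]
          linarith [h5]
        have hIh : (Ih d (Hop d (monOp d t (fun x : ESp d => ∑ j, e j x)))
              (monOp d t (fun x : ESp d => ∑ j, e j x))).re
            ≤ L2 d (Hop d (monOp d t (fun x : ESp d => ∑ j, e j x)))
              * L2 d (monOp d t (fun x : ESp d => ∑ j, e j x)) := by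
          refine le_trans (Complex.re_le_norm _) ?_
          exact Ih_norm_le hSg.hop hSg
        have hchain : (Ih d (Hop d (monOp d t (fun x : ESp d => ∑ j, e j x)))
              (monOp d t (fun x : ESp d => ∑ j, e j x))).re
            ≤ (C * Real.sqrt (4 + 2 * k) * N ^ (k + 1)
                * L2 d (fun x : ESp d => ∑ j, e j x)) ^ 2 := by
          have h5 : L2 d (Hop d (monOp d t (fun x : ESp d => ∑ j, e j x)))
                * L2 d (monOp d t (fun x : ESp d => ∑ j, e j x))
              ≤ ((C * (4 + 2 * k)) * N ^ (k + 2) * L2 d (fun x : ESp d => ∑ j, e j x))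
                * (C * N ^ k * L2 d (fun x : ESp d => ∑ j, e j x)) :=
            mul_le_mul hHopg hg_bd (L2_nonneg _)
              (mul_nonneg (mul_nonneg (by positivity) (by positivity)) (L2_nonneg _))
          have hs : Real.sqrt (4 + 2 * k) ^ 2 = 4 + 2 * (k:ℝ) :=
            Real.sq_sqrt (by positivity)
          have h6 : ((C * (4 + 2 * k)) * N ^ (k + 2) * L2 d (fun x : ESp d => ∑ j, e j x))
                * (C * N ^ k * L2 d (fun x : ESp d => ∑ j, e j x))
              = (C * Real.sqrt (4 + 2 * k) * N ^ (k + 1)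
                  * L2 d (fun x : ESp d => ∑ j, e j x)) ^ 2 := by
            rw [show (C * Real.sqrt (4 + 2 * k) * N ^ (k + 1)
                  * L2 d (fun x : ESp d => ∑ j, e j x)) ^ 2
                = C ^ 2 * (Real.sqrt (4 + 2 * k) ^ 2) * (N ^ (k + 1)) ^ 2
                  * (L2 d (fun x : ESp d => ∑ j, e j x)) ^ 2 from by ring, hs]
            rw [show ((N:ℝ) ^ (k + 1)) ^ 2 = N ^ (k + 2) * N ^ k from by
              rw [← pow_mul, ← pow_add]; congr 1; omega]
            ring
          rw [← h6]
          exact le_trans hIh h5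
        have hbase : 0 ≤ C * Real.sqrt (4 + 2 * k) * N ^ (k + 1)
            * L2 d (fun x : ESp d => ∑ j, e j x) :=
          mul_nonneg (by positivity) (L2_nonneg _)
        obtain ⟨b, jj⟩ := a
        cases b
        · exact L2_le_of_sq_le hbase (le_trans (xsq_le_hop hSg jj) hchain)
        · exact L2_le_of_sq_le hbase (le_trans (pd_sq_le_hop hSg jj) hchain)

end Key
/-- Commutator bound: for `u₀` spectrally localized at scale `N` and `A` an admissible
monomial operator of order `k`, `‖(H∘A − A∘H) u₀‖_{L²} ≤ C N^k ‖u₀‖_{L²}`. -/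
theorem stmt4 (d k : ℕ) (hd : 1 ≤ d) :
    ∃ C : ℝ, 0 < C ∧
      ∀ (N : ℝ), 1 ≤ N →
        ∀ (m : ℕ) (μ : Fin m → ℝ) (e : Fin m → ESp d → ℂ), Localized d N μ e →
        ∀ A : List (Bool × Fin d), A.length = k →
          L2 d (fun x =>
              Hop d (monOp d A (fun y => ∑ j, e j y)) x
                - monOp d A (fun y => Hop d (fun z => ∑ j, e j z) y) x)
            ≤ C * N ^ (k : ℝ) * L2 d (fun x => ∑ j, e j x) := by
  obtain ⟨C, hCpos, hC⟩ := key d k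
  refine ⟨2 * k * C + 1, by positivity, ?_⟩
  intro N hN m μ e hloc A hA
  have hN0 : (0:ℝ) < N := lt_of_lt_of_le one_pos hN
  have hSu : Sch d (fun x : ESp d => ∑ j, e j x) :=
    Sch.sum _ _ (fun j _ => loc_sch hloc j)
  have heq : L2 d (fun x =>
        Hop d (monOp d A (fun y : ESp d => ∑ j, e j y)) x
          - monOp d A (fun y => Hop d (fun z : ESp d => ∑ j, e j z) y) x)
      = L2 d (fun x => ∑ i : Fin A.length,
          (-2:ℂ) * monOp d (flipAt A (i:ℕ)) (fun y : ESp d => ∑ j, e j y) x) := by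
    congr 1
    funext x
    have h2 : monOp d A (fun y => Hop d (fun z : ESp d => ∑ j, e j z) y)
        = monOp d A (Hop d (fun z : ESp d => ∑ j, e j z)) := rfl
    rw [h2, comm_monOp hSu A x]
    ring
  rw [heq]
  refine le_trans (L2_sum_le Finset.univ _
    (fun i _ => ((hSu.monOp _).smul (-2)))) ?_
  have hterm : ∀ i : Fin A.length,
      L2 d (fun x => (-2:ℂ) * monOp d (flipAt A (i:ℕ))
          (fun y : ESp d => ∑ j, e j y) x)
      ≤ 2 * (C * N ^ k * L2 d (fun x : ESp d => ∑ j, e j x)) := by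
    intro i
    rw [L2_smul]
    have h3 := hC N hN m μ e hloc (flipAt A (i:ℕ)) (by rw [flipAt_length, hA])
    have hn2 : ‖(-2:ℂ)‖ = 2 := by simp
    rw [hn2]
    linarith
  refine le_trans (Finset.sum_le_sum (fun i _ => hterm i)) ?_
  rw [Finset.sum_const, Finset.card_univ, Fintype.card_fin, nsmul_eq_mul, hA,
    Real.rpow_natCast]
  have hX : 0 ≤ N ^ k * L2 d (fun x : ESp d => ∑ j, e j x) :=
    mul_nonneg (pow_pos hN0 k).le (L2_nonneg _)
  nlinarith [hX, hCpos]
end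
end
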